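/- arXiv:1207.3633 — 5 statements merged into one kernel-verified Lean document; each statement's English description precedes it below -/
import Mathlib

section
/- For every integer ℓ ≥ 2, the grid G = {1, …, ℓ−1} × {1, …, ℓ−1} ⊆ ℝ² contains no ℓ collinear points and contains no empty pentagon. In particular, G is a set of (ℓ−1)² points with neither an empty pentagon nor ℓ collinear points. -/
open Set

/-- Points in the plane. -/
abbrev Pt : Type := ℝ × ℝ

/-- The 2×2 determinant of two vectors in the plane. -/
def det2 (u v : Pt) : ℝ := u.1 * v.2 - u.2 * v.1

/-- The line through two points `u v` (all of `ℝ²` if `u = v`). -/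
def lineThrough (u v : Pt) : Set Pt := {x | det2 (v - u) (x - u) = 0}

/-- The open half-plane on the positive side of the oriented line `u v`. -/
def sidePos (u v : Pt) : Set Pt := {x | 0 < det2 (v - u) (x - u)}

/-- The open half-plane on the negative side of the oriented line `u v`. -/
def sideNeg (u v : Pt) : Set Pt := {x | det2 (v - u) (x - u) < 0}

/-- `X` is in strictly convex position: every point of `X` is an extreme
point of the convex hull of `X`. -/
def StrictlyConvexPos (X : Set Pt) : Prop :=
  ∀ x ∈ X, x ∈ Set.extremePoints ℝ (convexHull ℝ X)

/-- `X` is in weakly convex position: every point of `X` lies on the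
frontier of the convex hull of `X`. -/
def WeaklyConvexPos (X : Set Pt) : Prop :=
  ∀ x ∈ X, x ∈ frontier (convexHull ℝ X)

/-- `X` is an empty pentagon in `P`. -/
def EmptyPentagonIn (P X : Set Pt) : Prop :=
  X ⊆ P ∧ X.ncard = 5 ∧ StrictlyConvexPos X ∧ P ∩ convexHull ℝ X = X

/-- `P` contains an empty pentagon. -/
def HasEmptyPentagon (P : Set Pt) : Prop := ∃ X, EmptyPentagonIn P X

/-- `P` contains `ℓ` collinear points: some line contains at least `ℓ` points of `P`. -/
def HasCollinearPoints (P : Set Pt) (ℓ : ℕ) : Prop :=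
  ∃ S ⊆ P, S.Finite ∧ ℓ ≤ S.ncard ∧ Collinear ℝ S

/-- `c` lies strictly to the left of the oriented line from `a` to `b`. -/
def ccwStrict (a b c : Pt) : Prop := 0 < det2 (b - a) (c - a)

/-- The list of points `l` is the vertex list of a strictly convex polygon
traversed counterclockwise: for every directed edge (consecutive in the cyclic
order), all other listed points lie strictly to its left. -/
def StrictConvexCCWList (l : List Pt) : Prop :=
  3 ≤ l.length ∧
  ∀ i j : Fin l.length, j ≠ i → j.val ≠ (i.val + 1) % l.length →
    ccwStrict (l.get i) (l.get ⟨(i.val + 1) % l.length, Nat.mod_lt _ i.pos⟩) (l.get j)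

/-- The points of the list `l` are in strictly convex position, appearing in
this cyclic order (in one of the two orientations) on their convex hull. -/
def StrictConvexCyclic (l : List Pt) : Prop :=
  StrictConvexCCWList l ∨ StrictConvexCCWList l.reverse

/-- `[u,v]` is an edge of the (weakly convex) point set `L`: a segment between
distinct points of `L` lying in the frontier of the convex hull of `L` whose
relative interior contains no point of `L`. -/
def IsEdgeOf (L : Set Pt) (u v : Pt) : Prop :=
  u ∈ L ∧ v ∈ L ∧ u ≠ v ∧ segment ℝ u v ⊆ frontier (convexHull ℝ L) ∧
    openSegment ℝ u v ∩ L = ∅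

/-- `H` is the open half-plane bounded by the line through the edge `u v` of `B`
that contains no point of `B` (the half-plane `b⁺`). -/
def IsPosSide (B : Set Pt) (u v : Pt) (H : Set Pt) : Prop :=
  (H = sidePos u v ∨ H = sideNeg u v) ∧ H ∩ B = ∅

/-- `P` minus its first `n` convex layers. -/
def layerRest (P : Set Pt) : ℕ → Set Pt
  | 0 => P
  | n + 1 => layerRest P n \ frontier (convexHull ℝ (layerRest P n))

/-- The `i`-th convex layer of `P` (1-based). -/
def cLayer (P : Set Pt) (i : ℕ) : Set Pt :=
  layerRest P (i - 1) ∩ frontier (convexHull ℝ (layerRest P (i - 1)))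

/-- `A` is a hull-minimal weakly convex `m`-gon in `P`. -/
def HullMinimalWeakGon (P A : Set Pt) (m : ℕ) : Prop :=
  A ⊆ P ∧ A.ncard = m ∧ WeaklyConvexPos A ∧
  ∀ A' ⊆ P, A'.Finite → m ≤ A'.ncard → WeaklyConvexPos A' →
    ¬ convexHull ℝ A' ⊂ convexHull ℝ A

/-- The open triangle with corners `x`, `y`, `z`. -/
def openTriangle (x y z : Pt) : Set Pt := interior (convexHull ℝ {x, y, z})

/-- With respect to the fixed point `z`, the edge `x y` of the `i`-th convex
layer of `P` is empty: the open triangle `Δ(x,y,z)` contains no point of the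
`(i+1)`-st layer. -/
def IsEmptyEdge (P : Set Pt) (z : Pt) (i : ℕ) (x y : Pt) : Prop :=
  IsEdgeOf (cLayer P i) x y ∧ openTriangle x y z ∩ cLayer P (i + 1) = ∅

/-- `y` is the point of `L` immediately clockwise (as seen from the interior
point `z`) from the point `x` of the frontier of `conv L`. -/
def IsNextCW (z : Pt) (L : Set Pt) (x y : Pt) : Prop :=
  y ∈ L ∧ y ≠ x ∧ x ∈ frontier (convexHull ℝ L) ∧
  segment ℝ x y ⊆ frontier (convexHull ℝ L) ∧
  openSegment ℝ x y ∩ L = ∅ ∧ det2 (x - z) (y - z) < 0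

/-- `y` is the point of `L` immediately anticlockwise (as seen from the interior
point `z`) from the point `x` of the frontier of `conv L`. -/
def IsNextACW (z : Pt) (L : Set Pt) (x y : Pt) : Prop :=
  y ∈ L ∧ y ≠ x ∧ x ∈ frontier (convexHull ℝ L) ∧
  segment ℝ x y ⊆ frontier (convexHull ℝ L) ∧
  openSegment ℝ x y ∩ L = ∅ ∧ 0 < det2 (x - z) (y - z)

/-- `x` is the point of `conv L ∩ [v,z]` closest to `v`. -/
def ClosestOnSeg (L : Set Pt) (v z x : Pt) : Prop :=
  x ∈ convexHull ℝ L ∩ segment ℝ v z ∧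
  ∀ w ∈ convexHull ℝ L ∩ segment ℝ v z, dist v x ≤ dist v w

/-- `q` is the right child of the point `v` of the `i`-th convex layer of `P`
(with respect to the fixed point `z`). -/
def IsRightChild (P : Set Pt) (z : Pt) (i : ℕ) (v q : Pt) : Prop :=
  v ∈ cLayer P i ∧
  ∃ x, ClosestOnSeg (cLayer P (i + 1)) v z x ∧ IsNextCW z (cLayer P (i + 1)) x q

/-- `q` is the left child of the point `v` of the `i`-th convex layer of `P`
(with respect to the fixed point `z`). -/
def IsLeftChild (P : Set Pt) (z : Pt) (i : ℕ) (v q : Pt) : Prop :=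
  v ∈ cLayer P i ∧
  ∃ x, ClosestOnSeg (cLayer P (i + 1)) v z x ∧ IsNextACW z (cLayer P (i + 1)) x q

/-- `c 0, …, c (t-1)` is a right chain starting in layer `s`. -/
def IsRightChain (P : Set Pt) (z : Pt) (s t : ℕ) (c : ℕ → Pt) : Prop :=
  (∀ i, i < t → c i ∈ cLayer P (s + i)) ∧
  ∀ i, i + 1 < t → IsRightChild P z (s + i) (c i) (c (i + 1))

/-- `c 0, …, c (t-1)` is a left chain starting in layer `s`. -/
def IsLeftChain (P : Set Pt) (z : Pt) (s t : ℕ) (c : ℕ → Pt) : Prop :=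
  (∀ i, i < t → c i ∈ cLayer P (s + i)) ∧
  ∀ i, i + 1 < t → IsLeftChild P z (s + i) (c i) (c (i + 1))

/-- The ray starting at `z` with direction `d`. -/
def Ray (z d : Pt) : Set Pt := {p | ∃ t : ℝ, 0 ≤ t ∧ p = z + t • d}

/-- The chain `c 0, …, c (t-1)` wraps around `z`: every ray starting at `z`
meets the union of the edges of the chain at least twice. -/
def WrapsAround (z : Pt) (t : ℕ) (c : ℕ → Pt) : Prop :=
  ∀ d : Pt, d ≠ 0 → ∃ i j : ℕ, i + 1 < t ∧ j + 1 < t ∧ i ≠ j ∧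
    (Ray z d ∩ segment ℝ (c i) (c (i + 1))).Nonempty ∧
    (Ray z d ∩ segment ℝ (c j) (c (j + 1))).Nonempty

/-- The (open) 4-sector of a strictly convex quadrilateral `p₁ p₂ p₃ p₄`:
the set of points `q` such that `q, p₁, p₂, p₃, p₄` are five points in
strictly convex position in this cyclic order. -/
def Sector (p₁ p₂ p₃ p₄ : Pt) : Set Pt := {q | StrictConvexCyclic [q, p₁, p₂, p₃, p₄]}

/-- The closed 4-sector of a strictly convex quadrilateral. -/
def ClosedSector (p₁ p₂ p₃ p₄ : Pt) : Set Pt := closure (Sector p₁ p₂ p₃ p₄)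

/-- For `ℓ ≥ 2`, the `(ℓ-1) × (ℓ-1)` grid has `(ℓ-1)²` points
and contains neither `ℓ` collinear points nor an empty pentagon. -/
theorem statement1 (ℓ : ℕ) (hℓ : 2 ≤ ℓ) (G : Set Pt)
    (hG : G = {p : Pt | ∃ i j : ℕ, 1 ≤ i ∧ i ≤ ℓ - 1 ∧ 1 ≤ j ∧ j ≤ ℓ - 1 ∧
      p = ((i : ℝ), (j : ℝ))}) :
    G.ncard = (ℓ - 1) ^ 2 ∧ ¬ HasCollinearPoints G ℓ ∧ ¬ HasEmptyPentagon G := by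
  have hGmem : ∀ p : Pt, p ∈ G ↔ ∃ i j : ℕ, 1 ≤ i ∧ i ≤ ℓ - 1 ∧ 1 ≤ j ∧ j ≤ ℓ - 1 ∧
      p = ((i : ℝ), (j : ℝ)) := by
    intro p; rw [hG]; simp only [Set.mem_setOf_eq]
  have hinj : Function.Injective (fun q : ℕ × ℕ => (((q.1 : ℝ), (q.2 : ℝ)) : Pt)) := by
    rintro ⟨a, b⟩ ⟨c, d⟩ h
    simp only [Prod.mk.injEq, Nat.cast_inj] at h
    exact Prod.ext h.1 h.2
  refine ⟨?_, ?_, ?_⟩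
  · -- cardinality
    have hGF : G = ↑(((Finset.Icc 1 (ℓ - 1)) ×ˢ (Finset.Icc 1 (ℓ - 1))).image
        (fun q : ℕ × ℕ => (((q.1 : ℝ), (q.2 : ℝ)) : Pt))) := by
      ext p
      rw [hGmem]
      simp only [Finset.coe_image, Set.mem_image, Finset.mem_coe, Finset.mem_product,
        Finset.mem_Icc]
      constructor
      · rintro ⟨i, j, h1, h2, h3, h4, rfl⟩
        exact ⟨(i, j), ⟨⟨h1, h2⟩, ⟨h3, h4⟩⟩, rfl⟩
      · rintro ⟨⟨i, j⟩, ⟨⟨h1, h2⟩, ⟨h3, h4⟩⟩, rfl⟩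
        exact ⟨i, j, h1, h2, h3, h4, rfl⟩
    rw [hGF, Set.ncard_coe_finset, Finset.card_image_of_injective _ hinj,
      Finset.card_product, Nat.card_Icc]
    have h : ℓ - 1 + 1 - 1 = ℓ - 1 := by omega
    rw [h, sq]
  · -- no ℓ collinear points
    rintro ⟨S, hSG, hSfin, hScard, hScol⟩
    obtain ⟨p₀, v, hv⟩ := (collinear_iff_exists_forall_eq_smul_vadd S).mp hScol
    -- in every case we find an injective coordinate projection on S
    have key : S.ncard ≤ ℓ - 1 := by
      by_cases hv0 : v = 0
      · -- S ⊆ {p₀}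
        have : S ⊆ {p₀} := by
          intro p hp
          obtain ⟨r, hr⟩ := hv p hp
          simp [hv0, hr]
        calc S.ncard ≤ ({p₀} : Set Pt).ncard := Set.ncard_le_ncard this (Set.finite_singleton _)
          _ = 1 := Set.ncard_singleton _
          _ ≤ ℓ - 1 := by omega
      · -- choose an injective projection
        obtain ⟨proj, hprojinj, hprojrange⟩ :
            ∃ proj : Pt → ℝ, Set.InjOn proj S ∧
              ∀ p ∈ S, ∃ i : ℕ, 1 ≤ i ∧ i ≤ ℓ - 1 ∧ proj p = (i : ℝ) := by
          rcases eq_or_ne v.1 0 with hv1 | hv1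
          · have hv2 : v.2 ≠ 0 := by
              intro hv2; exact hv0 (Prod.ext hv1 hv2)
            refine ⟨Prod.snd, ?_, ?_⟩
            · intro p hp q hq hpq
              obtain ⟨r, hr⟩ := hv p hp
              obtain ⟨s, hs⟩ := hv q hq
              have hp2 : p.2 = r * v.2 + p₀.2 := by rw [hr]; rfl
              have hq2 : q.2 = s * v.2 + p₀.2 := by rw [hs]; rfl
              have : r = s := by
                have := hpq
                rw [hp2, hq2] at this
                exact mul_right_cancel₀ hv2 (by linarith)
              rw [hr, hs, this]
            · intro p hp
              obtain ⟨i, j, _, _, h3, h4, rfl⟩ := (hGmem p).mp (hSG hp)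
              exact ⟨j, h3, h4, rfl⟩
          · refine ⟨Prod.fst, ?_, ?_⟩
            · intro p hp q hq hpq
              obtain ⟨r, hr⟩ := hv p hp
              obtain ⟨s, hs⟩ := hv q hq
              have hp1 : p.1 = r * v.1 + p₀.1 := by rw [hr]; rfl
              have hq1 : q.1 = s * v.1 + p₀.1 := by rw [hs]; rfl
              have : r = s := by
                have := hpq
                rw [hp1, hq1] at this
                exact mul_right_cancel₀ hv1 (by linarith)
              rw [hr, hs, this]
            · intro p hp
              obtain ⟨i, j, h1, h2, _, _, rfl⟩ := (hGmem p).mp (hSG hp)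
              exact ⟨i, h1, h2, rfl⟩
        have himg : proj '' S ⊆ (fun i : ℕ => (i : ℝ)) '' (Set.Icc 1 (ℓ - 1)) := by
          rintro _ ⟨p, hp, rfl⟩
          obtain ⟨i, h1, h2, h3⟩ := hprojrange p hp
          exact ⟨i, ⟨h1, h2⟩, h3.symm⟩
        have hTfin : ((fun i : ℕ => (i : ℝ)) '' (Set.Icc 1 (ℓ - 1))).Finite :=
          (Set.finite_Icc 1 (ℓ - 1)).image _
        calc S.ncard = (proj '' S).ncard := (Set.ncard_image_of_injOn hprojinj).symm
          _ ≤ ((fun i : ℕ => (i : ℝ)) '' (Set.Icc 1 (ℓ - 1))).ncard :=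
              Set.ncard_le_ncard himg hTfin
          _ ≤ (Set.Icc 1 (ℓ - 1)).ncard := Set.ncard_image_le (Set.finite_Icc _ _)
          _ = ℓ - 1 := by
              rw [← Finset.coe_Icc, Set.ncard_coe_finset, Nat.card_Icc]
              omega
    omega
  · -- no empty pentagon
    rintro ⟨X, hXG, hX5, hXconv, hXempty⟩
    have hXfin : X.Finite := Set.finite_of_ncard_ne_zero (by omega)
    -- coordinates of points of X
    -- pigeonhole on parities
    have hcard : (Finset.univ : Finset (ZMod 2 × ZMod 2)).card < hXfin.toFinset.card := by
      rw [← Set.ncard_eq_toFinset_card X hXfin, hX5]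
      simp
    obtain ⟨p, hp, q, hq, hpq, hparity⟩ :=
      Finset.exists_ne_map_eq_of_card_lt_of_maps_to hcard
        (f := fun x : Pt => (((round x.1 : ℤ) : ZMod 2), ((round x.2 : ℤ) : ZMod 2)))
        (fun a _ => Finset.mem_univ _)
    rw [Set.Finite.mem_toFinset] at hp hq
    obtain ⟨i₁, j₁, hi₁1, hi₁2, hj₁1, hj₁2, hpe⟩ := (hGmem p).mp (hXG hp)
    obtain ⟨i₂, j₂, hi₂1, hi₂2, hj₂1, hj₂2, hqe⟩ := (hGmem q).mp (hXG hq)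
    have hp1 : p.1 = (i₁ : ℝ) := by rw [hpe]
    have hp2 : p.2 = (j₁ : ℝ) := by rw [hpe]
    have hq1 : q.1 = (i₂ : ℝ) := by rw [hqe]
    have hq2 : q.2 = (j₂ : ℝ) := by rw [hqe]
    have hri : ((i₁ : ℤ) : ZMod 2) = ((i₂ : ℤ) : ZMod 2) := by
      have := congrArg Prod.fst hparity
      simpa [hp1, hp2, hq1, hq2, round_natCast] using this
    have hrj : ((j₁ : ℤ) : ZMod 2) = ((j₂ : ℤ) : ZMod 2) := by
      have := congrArg Prod.snd hparity
      simpa [hp1, hp2, hq1, hq2, round_natCast] using this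
    have hmodi : i₁ ≡ i₂ [MOD 2] := by
      rw [← ZMod.natCast_eq_natCast_iff]
      push_cast at hri ⊢
      exact hri
    have hmodj : j₁ ≡ j₂ [MOD 2] := by
      rw [← ZMod.natCast_eq_natCast_iff]
      push_cast at hrj ⊢
      exact hrj
    have hdi : 2 ∣ i₁ + i₂ := by
      have h : i₁ % 2 = i₂ % 2 := hmodi
      omega
    have hdj : 2 ∣ j₁ + j₂ := by
      have h : j₁ % 2 = j₂ % 2 := hmodj
      omega
    obtain ⟨ki, hki⟩ := hdi
    obtain ⟨kj, hkj⟩ := hdj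
    set m : Pt := ((ki : ℝ), (kj : ℝ)) with hm
    have hmG : m ∈ G := by
      rw [hGmem]
      exact ⟨ki, kj, by omega, by omega, by omega, by omega, rfl⟩
    have hki' : (ki : ℝ) = ((i₁ : ℝ) + (i₂ : ℝ)) / 2 := by
      have h : ((i₁ + i₂ : ℕ) : ℝ) = ((2 * ki : ℕ) : ℝ) := by rw [hki]
      push_cast at h
      linarith
    have hkj' : (kj : ℝ) = ((j₁ : ℝ) + (j₂ : ℝ)) / 2 := by
      have h : ((j₁ + j₂ : ℕ) : ℝ) = ((2 * kj : ℕ) : ℝ) := by rw [hkj]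
      push_cast at h
      linarith
    have hmeq : m = (1/2 : ℝ) • p + (1/2 : ℝ) • q := by
      rw [hpe, hqe, hm]
      refine Prod.ext ?_ ?_
      · simp [hki']; ring
      · simp [hkj']; ring
    have hmopen : m ∈ openSegment ℝ p q :=
      ⟨1/2, 1/2, by norm_num, by norm_num, by norm_num, hmeq.symm⟩
    have hmconv : m ∈ convexHull ℝ X := by
      have hseg : segment ℝ p q ⊆ convexHull ℝ X :=
        (convex_convexHull ℝ X).segment_subset (subset_convexHull ℝ X hp)
          (subset_convexHull ℝ X hq)
      exact hseg (openSegment_subset_segment ℝ p q hmopen)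
    have hmX : m ∈ X := by
      rw [← hXempty]; exact ⟨hmG, hmconv⟩
    have hext := hXconv m hmX
    rw [mem_extremePoints] at hext
    exact hpq ((hext.2 p (subset_convexHull ℝ X hp) q (subset_convexHull ℝ X hq)
      hmopen).1.trans (hext.2 p (subset_convexHull ℝ X hp) q
      (subset_convexHull ℝ X hq) hmopen).2.symm)
end

section
/- Let P be a finite set of points in ℝ² that contains no empty pentagon, and let p₁p₂p₃p₄ be an empty quadrilateral in P, i.e., {p₁,p₂,p₃,p₄} ⊆ P is a set of 4 points in strictly convex position appearing in this cyclic order on their convex hull with P ∩ conv{p₁,p₂,p₃,p₄} = {p₁,p₂,p₃,p₄}. Then no point of P lies in the 4-sector S(p₁,p₂,p₃,p₄); that is, there is no q ∈ P such that q, p₁, p₂, p₃, p₄ are the vertices, in this cyclic order, of a strictly convex pentagon. -/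
open Set

namespace Statement3Aux

/-- The signed area functional of the triple `a b c`. -/
def tr (a b c : Pt) : ℝ := det2 (b - a) (c - a)

lemma tr_rot (a b c : Pt) : tr a b c = tr b c a := by
  simp only [tr, det2, Prod.fst_sub, Prod.snd_sub]; ring

lemma tr_rot2 (a b c : Pt) : tr a b c = tr c a b := by
  simp only [tr, det2, Prod.fst_sub, Prod.snd_sub]; ring

lemma tr_swap23 (a b c : Pt) : tr a b c = - tr a c b := by
  simp only [tr, det2, Prod.fst_sub, Prod.snd_sub]; ring

lemma tr_swap12 (a b c : Pt) : tr a b c = - tr b a c := by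
  simp only [tr, det2, Prod.fst_sub, Prod.snd_sub]; ring

lemma tr_xxz (a c : Pt) : tr a a c = 0 := by
  simp only [tr, det2, Prod.fst_sub, Prod.snd_sub]; ring

lemma tr_xyx (a b : Pt) : tr a b a = 0 := by
  simp only [tr, det2, Prod.fst_sub, Prod.snd_sub]; ring

lemma tr_xyy (a b : Pt) : tr a b b = 0 := by
  simp only [tr, det2, Prod.fst_sub, Prod.snd_sub]; ring

lemma ne12_of_tr {a b c : Pt} (h : 0 < tr a b c) : a ≠ b := by
  rintro rfl; rw [tr_xxz] at h; exact lt_irrefl _ h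

lemma ne13_of_tr {a b c : Pt} (h : 0 < tr a b c) : a ≠ c := by
  rintro rfl; rw [tr_xyx] at h; exact lt_irrefl _ h

lemma ne23_of_tr {a b c : Pt} (h : 0 < tr a b c) : b ≠ c := by
  rintro rfl; rw [tr_xyy] at h; exact lt_irrefl _ h

lemma cone_pos {u v w d : Pt} (huv : 0 < det2 u v) (huw : 0 < det2 u w)
    (hvw : det2 v w < 0) (hud : 0 < det2 u d) (hvd : 0 < det2 v d) :
    0 < det2 w d := by
  have key : det2 u v * det2 w d = det2 u w * det2 v d - det2 u d * det2 v w := by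
    simp only [det2]; ring
  nlinarith [mul_pos huw hvd, mul_pos hud (neg_pos.2 hvw)]

lemma cone_neg {u v w d : Pt} (huv : det2 u v < 0) (huw : det2 u w < 0)
    (hvw : 0 < det2 v w) (hud : det2 u d < 0) (hvd : det2 v d < 0) :
    det2 w d < 0 := by
  have key : det2 u v * det2 w d = det2 u w * det2 v d - det2 u d * det2 v w := by
    simp only [det2]; ring
  nlinarith [mul_pos (neg_pos.2 huw) (neg_pos.2 hvd), mul_pos (neg_pos.2 hud) hvw]

lemma det2_corner (u v n y : Pt) : det2 (n - u) (y - v) = tr u v y + tr v n y := by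
  simp only [tr, det2, Prod.fst_sub, Prod.snd_sub]; ring

lemma bary (x y z p : Pt) :
    tr x y z • p = tr p y z • x + tr x p z • y + tr x y p • z := by
  have h1 : (tr x y z • p).1 = (tr p y z • x + tr x p z • y + tr x y p • z).1 := by
    simp only [tr, det2, Prod.fst_add, Prod.smul_fst, smul_eq_mul, Prod.fst_sub, Prod.snd_sub]
    ring
  have h2 : (tr x y z • p).2 = (tr p y z • x + tr x p z • y + tr x y p • z).2 := by
    simp only [tr, det2, Prod.snd_add, Prod.smul_snd, smul_eq_mul, Prod.fst_sub, Prod.snd_sub]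
    ring
  exact Prod.ext h1 h2

lemma bary_sum (x y z p : Pt) : tr p y z + tr x p z + tr x y p = tr x y z := by
  simp only [tr, det2, Prod.fst_sub, Prod.snd_sub]; ring

lemma eval5 (w z v₀ v₁ v₂ v₃ v₄ : Pt) (l₀ l₁ l₂ l₃ l₄ : ℝ)
    (hsum : l₀ + l₁ + l₂ + l₃ + l₄ = 1) :
    det2 w (l₀ • v₀ + l₁ • v₁ + l₂ • v₂ + l₃ • v₃ + l₄ • v₄ - z) =
      l₀ * det2 w (v₀ - z) + l₁ * det2 w (v₁ - z) + l₂ * det2 w (v₂ - z) +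
      l₃ * det2 w (v₃ - z) + l₄ * det2 w (v₄ - z) := by
  have h : l₀ = 1 - l₁ - l₂ - l₃ - l₄ := by linarith
  subst h
  simp only [det2, Prod.fst_add, Prod.snd_add, Prod.smul_fst, Prod.smul_snd,
    Prod.fst_sub, Prod.snd_sub, smul_eq_mul]
  ring

lemma eval2 (w z y₁ y₂ : Pt) (s t : ℝ) (hst : s + t = 1) :
    det2 w (s • y₁ + t • y₂ - z) = s * det2 w (y₁ - z) + t * det2 w (y₂ - z) := by
  have h : s = 1 - t := by linarith
  subst h
  simp only [det2, Prod.fst_add, Prod.snd_add, Prod.smul_fst, Prod.smul_snd,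
    Prod.fst_sub, Prod.snd_sub, smul_eq_mul]
  ring

lemma halfplane_convex (w z : Pt) : Convex ℝ {v : Pt | 0 ≤ det2 w (v - z)} := by
  have hlin : IsLinearMap ℝ (fun v : Pt => det2 w v) := by
    constructor
    · intro x y; simp only [det2, Prod.fst_add, Prod.snd_add]; ring
    · intro c x; simp only [det2, Prod.smul_fst, Prod.smul_snd, smul_eq_mul]; ring
  have h : {v : Pt | 0 ≤ det2 w (v - z)} = {v : Pt | det2 w z ≤ (fun v : Pt => det2 w v) v} := by
    ext v
    simp only [mem_setOf_eq, det2, Prod.fst_sub, Prod.snd_sub]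
    constructor <;> intro h <;> nlinarith
  rw [h]
  exact convex_halfSpace_ge hlin _

lemma mem_hull4 {a b c d x : Pt} {t c₁ c₂ c₃ c₄ : ℝ} (ht : 0 < t)
    (h₁ : 0 ≤ c₁) (h₂ : 0 ≤ c₂) (h₃ : 0 ≤ c₃) (h₄ : 0 ≤ c₄)
    (hsum : c₁ + c₂ + c₃ + c₄ = t)
    (hx : t • x = c₁ • a + c₂ • b + c₃ • c + c₄ • d) :
    x ∈ convexHull ℝ ({a, b, c, d} : Set Pt) := by
  have hz : ∀ i ∈ (Finset.univ : Finset (Fin 4)),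
      (![a, b, c, d]) i ∈ ({a, b, c, d} : Set Pt) := by
    intro i _; fin_cases i <;> simp
  have hw0 : ∀ i ∈ (Finset.univ : Finset (Fin 4)), 0 ≤ (![c₁, c₂, c₃, c₄]) i := by
    intro i _; fin_cases i <;> assumption
  have hws : ∑ i : Fin 4, (![c₁, c₂, c₃, c₄]) i = t := by
    simp [Fin.sum_univ_four, hsum]
  have h := Finset.centerMass_mem_convexHull (Finset.univ : Finset (Fin 4)) hw0
    (by rw [hws]; exact ht) hz
  have hc : (Finset.univ : Finset (Fin 4)).centerMass (![c₁, c₂, c₃, c₄]) (![a, b, c, d]) = x := by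
    rw [Finset.centerMass, hws]
    rw [Fin.sum_univ_four]
    simp only [Matrix.cons_val_zero, Matrix.cons_val_one, Matrix.head_cons,
      Matrix.cons_val_two, Matrix.tail_cons, Matrix.cons_val_three]
    rw [← hx, smul_smul, inv_mul_cancel₀ ht.ne', one_smul]
  rwa [hc] at h

lemma exists_comb5 {v₀ v₁ v₂ v₃ v₄ x : Pt}
    (hx : x ∈ convexHull ℝ ({v₀, v₁, v₂, v₃, v₄} : Set Pt)) :
    ∃ l₀ l₁ l₂ l₃ l₄ : ℝ, 0 ≤ l₀ ∧ 0 ≤ l₁ ∧ 0 ≤ l₂ ∧ 0 ≤ l₃ ∧ 0 ≤ l₄ ∧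
      l₀ + l₁ + l₂ + l₃ + l₄ = 1 ∧
      x = l₀ • v₀ + l₁ • v₁ + l₂ • v₂ + l₃ • v₃ + l₄ • v₄ := by
  rw [show ({v₀, v₁, v₂, v₃, v₄} : Set Pt) = insert v₀ {v₁, v₂, v₃, v₄} from rfl,
    convexHull_insert (by exact ⟨v₁, by simp⟩), mem_convexJoin] at hx
  obtain ⟨p, hp, z, hz, hseg⟩ := hx
  rw [mem_singleton_iff] at hp; subst hp
  rw [show ({v₁, v₂, v₃, v₄} : Set Pt) = insert v₁ {v₂, v₃, v₄} from rfl,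
    convexHull_insert (by exact ⟨v₂, by simp⟩), mem_convexJoin] at hz
  obtain ⟨p, hp, z₁, hz₁, hseg₁⟩ := hz
  rw [mem_singleton_iff] at hp; subst hp
  rw [show ({v₂, v₃, v₄} : Set Pt) = insert v₂ {v₃, v₄} from rfl,
    convexHull_insert (by exact ⟨v₃, by simp⟩), mem_convexJoin] at hz₁
  obtain ⟨p, hp, z₂, hz₂, hseg₂⟩ := hz₁
  rw [mem_singleton_iff] at hp; subst hp
  rw [show ({v₃, v₄} : Set Pt) = insert v₃ {v₄} from rfl,
    convexHull_insert (by exact ⟨v₄, by simp⟩), mem_convexJoin] at hz₂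
  obtain ⟨p, hp, z₃, hz₃, hseg₃⟩ := hz₂
  rw [mem_singleton_iff] at hp; subst hp
  rw [convexHull_singleton, mem_singleton_iff] at hz₃; subst hz₃
  obtain ⟨a₀, b₀, ha₀, hb₀, hab₀, h₀⟩ := hseg
  obtain ⟨a₁, b₁, ha₁, hb₁, hab₁, h₁⟩ := hseg₁
  obtain ⟨a₂, b₂, ha₂, hb₂, hab₂, h₂⟩ := hseg₂
  obtain ⟨a₃, b₃, ha₃, hb₃, hab₃, h₃⟩ := hseg₃
  refine ⟨a₀, b₀ * a₁, b₀ * b₁ * a₂, b₀ * b₁ * b₂ * a₃, b₀ * b₁ * b₂ * b₃,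
    ha₀, by positivity, by positivity, by positivity, by positivity, ?_, ?_⟩
  · linear_combination hab₀ + b₀ * hab₁ + b₀ * b₁ * hab₂ + b₀ * b₁ * b₂ * hab₃
  · rw [← h₀, ← h₁, ← h₂, ← h₃]
    module

lemma extreme5 (v₀ v₁ v₂ v₃ v₄ : Pt) (w : Pt)
    (h1 : 0 < det2 w (v₁ - v₀)) (h2 : 0 < det2 w (v₂ - v₀))
    (h3 : 0 < det2 w (v₃ - v₀)) (h4 : 0 < det2 w (v₄ - v₀)) :
    v₀ ∈ Set.extremePoints ℝ (convexHull ℝ ({v₀, v₁, v₂, v₃, v₄} : Set Pt)) := by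
  set X : Set Pt := {v₀, v₁, v₂, v₃, v₄} with hX
  have hsub : convexHull ℝ X ⊆ {v : Pt | 0 ≤ det2 w (v - v₀)} := by
    apply convexHull_min _ (halfplane_convex w v₀)
    intro y hy
    simp only [hX, mem_insert_iff, mem_singleton_iff] at hy
    rcases hy with rfl | rfl | rfl | rfl | rfl <;> simp only [mem_setOf_eq]
    · simp [det2]
    · exact h1.le
    · exact h2.le
    · exact h3.le
    · exact h4.le
  have hzero : ∀ y ∈ convexHull ℝ X, det2 w (y - v₀) = 0 → y = v₀ := by
    intro y hy hy0
    obtain ⟨l₀, l₁, l₂, l₃, l₄, n₀, n₁, n₂, n₃, n₄, hsum, hrep⟩ := exists_comb5 hy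
    rw [hrep] at hy0
    rw [eval5 w v₀ v₀ v₁ v₂ v₃ v₄ l₀ l₁ l₂ l₃ l₄ hsum] at hy0
    have e0 : det2 w (v₀ - v₀) = 0 := by simp [det2]
    rw [e0] at hy0
    rw [mul_zero] at hy0
    have z1 : l₁ ≤ 0 := by nlinarith [mul_nonneg n₂ h2.le, mul_nonneg n₃ h3.le, mul_nonneg n₄ h4.le]
    have z2 : l₂ ≤ 0 := by nlinarith [mul_nonneg n₁ h1.le, mul_nonneg n₃ h3.le, mul_nonneg n₄ h4.le]
    have z3 : l₃ ≤ 0 := by nlinarith [mul_nonneg n₁ h1.le, mul_nonneg n₂ h2.le, mul_nonneg n₄ h4.le]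
    have z4 : l₄ ≤ 0 := by nlinarith [mul_nonneg n₁ h1.le, mul_nonneg n₂ h2.le, mul_nonneg n₃ h3.le]
    have e1 : l₁ = 0 := le_antisymm z1 n₁
    have e2 : l₂ = 0 := le_antisymm z2 n₂
    have e3 : l₃ = 0 := le_antisymm z3 n₃
    have e4 : l₄ = 0 := le_antisymm z4 n₄
    have e5 : l₀ = 1 := by linarith
    rw [hrep, e1, e2, e3, e4, e5]
    module
  refine ⟨subset_convexHull ℝ X (by simp [hX]), ?_⟩
  intro y hy z hz hseg
  obtain ⟨s, t, hs, ht, hst, heq⟩ := hseg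
  have hy0 : 0 ≤ det2 w (y - v₀) := hsub hy
  have hz0 : 0 ≤ det2 w (z - v₀) := hsub hz
  have h0 : det2 w (v₀ - v₀) = 0 := by simp [det2]
  have key : det2 w (s • y + t • z - v₀) = s * det2 w (y - v₀) + t * det2 w (z - v₀) :=
    eval2 w v₀ y z s t hst
  rw [heq, h0] at key
  have hy1 : det2 w (y - v₀) = 0 := by nlinarith
  have hz1 : det2 w (z - v₀) = 0 := by nlinarith
  exact hzero y hy hy1

lemma ccw_ext {v0 v1 v2 v3 v4 : Pt} (h : StrictConvexCCWList [v0, v1, v2, v3, v4]) :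
    (0 < tr v0 v1 v2) ∧ (0 < tr v0 v1 v3) ∧ (0 < tr v0 v1 v4) ∧
    (0 < tr v1 v2 v3) ∧ (0 < tr v1 v2 v4) ∧ (0 < tr v1 v2 v0) ∧
    (0 < tr v2 v3 v4) ∧ (0 < tr v2 v3 v0) ∧ (0 < tr v2 v3 v1) ∧
    (0 < tr v3 v4 v0) ∧ (0 < tr v3 v4 v1) ∧ (0 < tr v3 v4 v2) ∧
    (0 < tr v4 v0 v1) ∧ (0 < tr v4 v0 v2) ∧ (0 < tr v4 v0 v3) := by
  obtain ⟨-, h⟩ := h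
  have e0 : (0:ℕ) < [v0, v1, v2, v3, v4].length := by norm_num
  have e1 : (1:ℕ) < [v0, v1, v2, v3, v4].length := by norm_num
  have e2 : (2:ℕ) < [v0, v1, v2, v3, v4].length := by norm_num
  have e3 : (3:ℕ) < [v0, v1, v2, v3, v4].length := by norm_num
  have e4 : (4:ℕ) < [v0, v1, v2, v3, v4].length := by norm_num
  refine ⟨?_, ?_, ?_, ?_, ?_, ?_, ?_, ?_, ?_, ?_, ?_, ?_, ?_, ?_, ?_⟩
  · have x := h ⟨0, e0⟩ ⟨2, e2⟩ (by norm_num [Fin.ext_iff]) (by norm_num [Fin.ext_iff])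
    norm_num [List.get] at x; exact x
  · have x := h ⟨0, e0⟩ ⟨3, e3⟩ (by norm_num [Fin.ext_iff]) (by norm_num [Fin.ext_iff])
    norm_num [List.get] at x; exact x
  · have x := h ⟨0, e0⟩ ⟨4, e4⟩ (by norm_num [Fin.ext_iff]) (by norm_num [Fin.ext_iff])
    norm_num [List.get] at x; exact x
  · have x := h ⟨1, e1⟩ ⟨3, e3⟩ (by norm_num [Fin.ext_iff]) (by norm_num [Fin.ext_iff])
    norm_num [List.get] at x; exact x
  · have x := h ⟨1, e1⟩ ⟨4, e4⟩ (by norm_num [Fin.ext_iff]) (by norm_num [Fin.ext_iff])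
    norm_num [List.get] at x; exact x
  · have x := h ⟨1, e1⟩ ⟨0, e0⟩ (by norm_num [Fin.ext_iff]) (by norm_num [Fin.ext_iff])
    norm_num [List.get] at x; exact x
  · have x := h ⟨2, e2⟩ ⟨4, e4⟩ (by norm_num [Fin.ext_iff]) (by norm_num [Fin.ext_iff])
    norm_num [List.get] at x; exact x
  · have x := h ⟨2, e2⟩ ⟨0, e0⟩ (by norm_num [Fin.ext_iff]) (by norm_num [Fin.ext_iff])
    norm_num [List.get] at x; exact x
  · have x := h ⟨2, e2⟩ ⟨1, e1⟩ (by norm_num [Fin.ext_iff]) (by norm_num [Fin.ext_iff])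
    norm_num [List.get] at x; exact x
  · have x := h ⟨3, e3⟩ ⟨0, e0⟩ (by norm_num [Fin.ext_iff]) (by norm_num [Fin.ext_iff])
    norm_num [List.get] at x; exact x
  · have x := h ⟨3, e3⟩ ⟨1, e1⟩ (by norm_num [Fin.ext_iff]) (by norm_num [Fin.ext_iff])
    norm_num [List.get] at x; exact x
  · have x := h ⟨3, e3⟩ ⟨2, e2⟩ (by norm_num [Fin.ext_iff]) (by norm_num [Fin.ext_iff])
    norm_num [List.get] at x; exact x
  · have x := h ⟨4, e4⟩ ⟨1, e1⟩ (by norm_num [Fin.ext_iff]) (by norm_num [Fin.ext_iff])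
    norm_num [List.get] at x; exact x
  · have x := h ⟨4, e4⟩ ⟨2, e2⟩ (by norm_num [Fin.ext_iff]) (by norm_num [Fin.ext_iff])
    norm_num [List.get] at x; exact x
  · have x := h ⟨4, e4⟩ ⟨3, e3⟩ (by norm_num [Fin.ext_iff]) (by norm_num [Fin.ext_iff])
    norm_num [List.get] at x; exact x

set_option maxHeartbeats 2000000 in
lemma main (P : Set Pt) (hP : P.Finite) (hpent : ¬ HasEmptyPentagon P)
    (a b c d : Pt) (hsub : ({a, b, c, d} : Set Pt) ⊆ P)
    (hempty : P ∩ convexHull ℝ ({a, b, c, d} : Set Pt) = {a, b, c, d})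
    (q₀ : Pt) (hq₀P : q₀ ∈ P)
    (Q1 : 0 < tr a b c) (Q2 : 0 < tr a b d) (Q3 : 0 < tr a c d) (Q4 : 0 < tr b c d)
    (t1 : 0 < tr a b q₀) (t2 : 0 < tr b c q₀) (t3 : 0 < tr c d q₀) (t4 : tr d a q₀ < 0) :
    False := by
  classical
  set T : Set Pt :=
    {p : Pt | p ∈ P ∧ 0 < tr a b p ∧ 0 < tr b c p ∧ 0 < tr c d p ∧ tr d a p < 0} with hTdef
  have hTsub : T ⊆ P := fun p hp => hp.1
  have hTfin : T.Finite := hP.subset hTsub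
  have hTne : T.Nonempty := ⟨q₀, hq₀P, t1, t2, t3, t4⟩
  obtain ⟨q, hqT, hqmax⟩ : ∃ q ∈ T, ∀ p ∈ T, tr d a q ≤ tr d a p → tr d a q = tr d a p := by
    obtain ⟨q, hq, h⟩ := Set.exists_max_image T (fun p => tr d a p) hTfin hTne
    exact ⟨q, hq, fun p hp hle => le_antisymm hle (h p hp)⟩
  obtain ⟨hqP, s1, s2, s3, s4⟩ := hqT
  -- derived orientation facts
  have P4 : 0 < tr a d q := by rw [tr_swap12]; linarith
  have d1 : 0 < tr a c q := by
    have hvw : det2 (d - a) (c - a) < 0 := by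
      show tr a d c < 0
      rw [tr_swap23 a d c]; linarith
    exact cone_pos (u := b - a) (v := d - a) Q2 Q1 hvw s1 P4
  have d2 : 0 < tr d q b := by
    have h := cone_neg (u := c - d) (v := a - d) (w := b - d) (d := q - d)
      (by show tr d c a < 0; rw [tr_swap23 d c a, tr_rot d a c]; linarith)
      (by show tr d c b < 0; rw [tr_swap23 d c b, tr_rot d b c]; linarith)
      (by show 0 < tr d a b; rw [tr_rot d a b]; linarith)
      (by show tr d c q < 0; rw [tr_swap12 d c q]; linarith)
      s4
    have h' : tr d b q < 0 := h
    rw [tr_swap23 d q b]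
    linarith
  -- distinctness
  have hqa : q ≠ a := (ne13_of_tr s1).symm
  have hqb : q ≠ b := (ne23_of_tr s1).symm
  have hqc : q ≠ c := (ne23_of_tr s2).symm
  have hqd : q ≠ d := (ne23_of_tr s3).symm
  have hab : a ≠ b := ne12_of_tr Q1
  have hac : a ≠ c := ne13_of_tr Q1
  have had : a ≠ d := ne13_of_tr Q2
  have hbc : b ≠ c := ne23_of_tr Q1
  have hbd : b ≠ d := ne13_of_tr Q4
  have hcd : c ≠ d := ne23_of_tr Q4
  -- rotated positivity facts
  have A1 : 0 < tr d q a := by rw [tr_rot2 d q a]; exact P4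
  have A2 : 0 < tr q a b := by rw [tr_rot q a b]; exact s1
  have A3 : 0 < tr d q c := by rw [tr_rot2 d q c]; exact s3
  have A4 : 0 < tr q a c := by rw [tr_rot q a c]; exact d1
  have A5 : 0 < tr q a d := by rw [tr_rot q a d]; exact P4
  have A6 : 0 < tr b c a := by rw [tr_rot2 b c a]; exact Q1
  have A7 : 0 < tr c d b := by rw [tr_rot2 c d b]; exact Q4
  have A8 : 0 < tr c d a := by rw [tr_rot2 c d a]; exact Q3
  set X : Set Pt := insert q {a, b, c, d} with hXdef
  have hXP : X ⊆ P := Set.insert_subset hqP hsub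
  have hfin3 : ({b, c, d} : Set Pt).Finite := Set.toFinite _
  have hfin4 : ({a, b, c, d} : Set Pt).Finite := Set.toFinite _
  have hncard : X.ncard = 5 := by
    rw [hXdef]
    rw [Set.ncard_insert_of_notMem (by simp [hqa, hqb, hqc, hqd]) hfin4]
    rw [Set.ncard_insert_of_notMem (by simp [hab, hac, had]) hfin3]
    rw [Set.ncard_insert_of_notMem (by simp [hbc, hbd]) (Set.toFinite _)]
    rw [Set.ncard_insert_of_notMem (by simp [hcd]) (Set.toFinite _)]
    rw [Set.ncard_singleton]
  have hconvpos : StrictlyConvexPos X := by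
    intro x hx
    simp only [hXdef, Set.mem_insert_iff, Set.mem_singleton_iff] at hx
    have z1 := tr_xyx q a
    have z2 := tr_xyy q a
    have z3 := tr_xyx d q
    have z4 := tr_xyy d q
    have z5 := tr_xyx a b
    have z6 := tr_xyy a b
    have z7 := tr_xyx b c
    have z8 := tr_xyy b c
    have z9 := tr_xyx c d
    have z10 := tr_xyy c d
    rcases hx with rfl | rfl | rfl | rfl | rfl
    · -- x = q
      exact extreme5 x a b c d (a - d)
        (by rw [det2_corner d x a a]; linarith)
        (by rw [det2_corner d x a b]; linarith)
        (by rw [det2_corner d x a c]; linarith)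
        (by rw [det2_corner d x a d]; linarith)
    · -- x = a
      have hXeq : X = ({x, q, b, c, d} : Set Pt) := by
        rw [hXdef]; ext y; simp; tauto
      rw [hXeq]
      exact extreme5 x q b c d (b - q)
        (by rw [det2_corner q x b q]; linarith)
        (by rw [det2_corner q x b b]; linarith)
        (by rw [det2_corner q x b c]; linarith)
        (by rw [det2_corner q x b d]; linarith)
    · -- x = b
      have hXeq : X = ({x, a, c, d, q} : Set Pt) := by
        rw [hXdef]; ext y; simp; tauto
      rw [hXeq]
      exact extreme5 x a c d q (c - a)
        (by rw [det2_corner a x c a]; linarith)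
        (by rw [det2_corner a x c c]; linarith)
        (by rw [det2_corner a x c d]; linarith)
        (by rw [det2_corner a x c q]; linarith)
    · -- x = c
      have hXeq : X = ({x, a, b, d, q} : Set Pt) := by
        rw [hXdef]; ext y; simp; tauto
      rw [hXeq]
      exact extreme5 x a b d q (d - b)
        (by rw [det2_corner b x d a]; linarith)
        (by rw [det2_corner b x d b]; linarith)
        (by rw [det2_corner b x d d]; linarith)
        (by rw [det2_corner b x d q]; linarith)
    · -- x = d
      have hXeq : X = ({x, a, b, c, q} : Set Pt) := by
        rw [hXdef]; ext y; simp; tauto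
      rw [hXeq]
      exact extreme5 x a b c q (q - c)
        (by rw [det2_corner c x q a]; linarith)
        (by rw [det2_corner c x q b]; linarith)
        (by rw [det2_corner c x q c]; linarith)
        (by rw [det2_corner c x q q]; linarith)
  have hinter : P ∩ convexHull ℝ X = X := by
    apply Set.Subset.antisymm
    · rintro p ⟨hpP, hpC⟩
      have hpC' : p ∈ convexHull ℝ ({q, a, b, c, d} : Set Pt) := hpC
      obtain ⟨l₀, l₁, l₂, l₃, l₄, n₀, n₁, n₂, n₃, n₄, hsum, hrep⟩ := exists_comb5 hpC'
      have E1 : tr a b p = l₀ * tr a b q + l₁ * tr a b a + l₂ * tr a b b +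
          l₃ * tr a b c + l₄ * tr a b d := by
        show det2 (b - a) (p - a) = _
        rw [hrep]; exact eval5 (b - a) a q a b c d l₀ l₁ l₂ l₃ l₄ hsum
      have E2 : tr b c p = l₀ * tr b c q + l₁ * tr b c a + l₂ * tr b c b +
          l₃ * tr b c c + l₄ * tr b c d := by
        show det2 (c - b) (p - b) = _
        rw [hrep]; exact eval5 (c - b) b q a b c d l₀ l₁ l₂ l₃ l₄ hsum
      have E3 : tr c d p = l₀ * tr c d q + l₁ * tr c d a + l₂ * tr c d b +
          l₃ * tr c d c + l₄ * tr c d d := by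
        show det2 (d - c) (p - c) = _
        rw [hrep]; exact eval5 (d - c) c q a b c d l₀ l₁ l₂ l₃ l₄ hsum
      have E4 : tr d a p = l₀ * tr d a q + l₁ * tr d a a + l₂ * tr d a b +
          l₃ * tr d a c + l₄ * tr d a d := by
        show det2 (a - d) (p - d) = _
        rw [hrep]; exact eval5 (a - d) d q a b c d l₀ l₁ l₂ l₃ l₄ hsum
      rw [tr_xyx a b, tr_xyy a b] at E1
      rw [tr_xyx b c, tr_xyy b c, show tr b c a = tr a b c from by rw [tr_rot2 b c a]] at E2
      rw [tr_xyx c d, tr_xyy c d, show tr c d a = tr a c d from by rw [tr_rot2 c d a],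
        show tr c d b = tr b c d from by rw [tr_rot2 c d b]] at E3
      rw [show tr d a a = 0 from tr_xyy d a, show tr d a d = 0 from tr_xyx d a,
        show tr d a b = tr a b d from by rw [tr_rot d a b],
        show tr d a c = tr a c d from by rw [tr_rot d a c]] at E4
      rcases eq_or_lt_of_le n₀ with h₀ | h₀
      · -- l₀ = 0 : p lies in the quadrilateral
        have hq4 : p ∈ convexHull ℝ ({a, b, c, d} : Set Pt) := by
          refine mem_hull4 (t := 1) one_pos n₁ n₂ n₃ n₄ (by linarith) ?_
          rw [one_smul, hrep, ← h₀, zero_smul, zero_add]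
        have hmem : p ∈ ({a, b, c, d} : Set Pt) := by
          rw [← hempty]; exact ⟨hpP, hq4⟩
        exact Set.subset_insert q {a, b, c, d} hmem
      · rcases lt_or_ge (tr d a p) 0 with h4p | h4p
        · -- p is in the sector: by maximality p = q
          have hp1 : 0 < tr a b p := by
            rw [E1]
            nlinarith [mul_pos h₀ s1, mul_nonneg n₃ Q1.le, mul_nonneg n₄ Q2.le]
          have hp2 : 0 < tr b c p := by
            rw [E2]
            nlinarith [mul_pos h₀ s2, mul_nonneg n₁ Q1.le, mul_nonneg n₄ Q4.le]
          have hp3 : 0 < tr c d p := by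
            rw [E3]
            nlinarith [mul_pos h₀ s3, mul_nonneg n₁ Q3.le, mul_nonneg n₂ Q4.le]
          have hpT : p ∈ T := ⟨hpP, hp1, hp2, hp3, h4p⟩
          have hle : tr d a q ≤ tr d a p := by
            nlinarith [E4, mul_nonneg n₂ Q2.le, mul_nonneg n₃ Q3.le,
              mul_nonneg (by linarith : (0:ℝ) ≤ 1 - l₀) (by linarith : 0 ≤ -tr d a q)]
          have heq : tr d a q = tr d a p := hqmax p hpT hle
          have hβγ : 0 ≤ l₂ * tr a b d + l₃ * tr a c d := by
            have u1 := mul_nonneg n₂ Q2.le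
            have u2 := mul_nonneg n₃ Q3.le
            linarith
          have e : (1 - l₀) * tr d a q = l₂ * tr a b d + l₃ * tr a c d := by
            linear_combination heq + E4
          have hl0 : l₀ = 1 := by
            by_contra hne
            have hlt : l₀ < 1 := lt_of_le_of_ne (by linarith) hne
            nlinarith [mul_pos (by linarith : (0:ℝ) < 1 - l₀) (by linarith : 0 < -tr d a q)]
          have e1 : l₁ = 0 := by linarith
          have e2 : l₂ = 0 := by linarith
          have e3 : l₃ = 0 := by linarith
          have e4 : l₄ = 0 := by linarith
          have hpq : p = q := by rw [hrep, hl0, e1, e2, e3, e4]; module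
          rw [hpq]
          exact Set.mem_insert q _
        · -- the barycentric case: p lies in the quadrilateral
          have hb := bary a b d q
          have hc := bary a c d q
          have hBrot : tr a q d = tr d a q := by rw [tr_rot a q d, tr_rot q d a]
          have hA : 0 < tr q b d := by rw [tr_rot q b d, tr_rot b d q]; exact d2
          have hA' : 0 < tr q c d := by rw [tr_rot q c d]; exact s3
          have hS : 0 < l₂ * tr a b d + l₃ * tr a c d := by
            nlinarith [mul_pos h₀ (by linarith : 0 < -tr d a q)]
          have hq4 : p ∈ convexHull ℝ ({a, b, c, d} : Set Pt) := by
            refine mem_hull4 (t := l₂ * tr a b d + l₃ * tr a c d) hS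
              (c₁ := l₁ * (l₂ * tr a b d + l₃ * tr a c d) + l₀ * l₂ * tr q b d + l₀ * l₃ * tr q c d)
              (c₂ := l₂ * (l₂ * tr a b d + l₃ * tr a c d) + l₀ * l₂ * tr a q d)
              (c₃ := l₃ * (l₂ * tr a b d + l₃ * tr a c d) + l₀ * l₃ * tr a q d)
              (c₄ := l₄ * (l₂ * tr a b d + l₃ * tr a c d) + l₀ * l₂ * tr a b q + l₀ * l₃ * tr a c q)
              ?_ ?_ ?_ ?_ ?_ ?_
            · have u1 := mul_nonneg n₁ hS.le
              have u2 := mul_nonneg (mul_nonneg n₀ n₂) hA.le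
              have u3 := mul_nonneg (mul_nonneg n₀ n₃) hA'.le
              nlinarith
            · rw [hBrot]
              have hh : l₂ * tr d a p =
                  l₂ * l₀ * tr d a q + l₂ * (l₂ * tr a b d + l₃ * tr a c d) := by
                rw [E4]; ring
              nlinarith [hh, mul_nonneg n₂ h4p]
            · rw [hBrot]
              have hh : l₃ * tr d a p =
                  l₃ * l₀ * tr d a q + l₃ * (l₂ * tr a b d + l₃ * tr a c d) := by
                rw [E4]; ring
              nlinarith [hh, mul_nonneg n₃ h4p]
            · have u1 := mul_nonneg n₄ hS.le
              have u2 := mul_nonneg (mul_nonneg n₀ n₂) s1.le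
              have u3 := mul_nonneg (mul_nonneg n₀ n₃) d1.le
              nlinarith
            · have hs4 := bary_sum a b d q
              have hs4' := bary_sum a c d q
              linear_combination (l₀ * l₂) * hs4 + (l₀ * l₃) * hs4' +
                (l₂ * tr a b d + l₃ * tr a c d) * hsum
            · have hb1 := congrArg Prod.fst hb
              have hb2 := congrArg Prod.snd hb
              have hc1 := congrArg Prod.fst hc
              have hc2 := congrArg Prod.snd hc
              have hp1 := congrArg Prod.fst hrep
              have hp2 := congrArg Prod.snd hrep
              simp only [Prod.fst_add, Prod.snd_add, Prod.smul_fst, Prod.smul_snd,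
                smul_eq_mul] at hb1 hb2 hc1 hc2 hp1 hp2
              refine Prod.ext ?_ ?_
              · simp only [Prod.fst_add, Prod.smul_fst, smul_eq_mul]
                linear_combination (l₂ * tr a b d + l₃ * tr a c d) * hp1 +
                  (l₀ * l₂) * hb1 + (l₀ * l₃) * hc1
              · simp only [Prod.snd_add, Prod.smul_snd, smul_eq_mul]
                linear_combination (l₂ * tr a b d + l₃ * tr a c d) * hp2 +
                  (l₀ * l₂) * hb2 + (l₀ * l₃) * hc2
          have hmem : p ∈ ({a, b, c, d} : Set Pt) := by
            rw [← hempty]; exact ⟨hpP, hq4⟩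
          exact Set.subset_insert q {a, b, c, d} hmem
    · intro x hx
      exact ⟨hXP hx, subset_convexHull ℝ X hx⟩
  exact hpent ⟨X, hXP, hncard, hconvpos, hinter⟩

end Statement3Aux

/-- If `P` has no empty pentagon and `p₁p₂p₃p₄` is an empty
quadrilateral in `P`, then no point of `P` lies in the 4-sector
`S(p₁,p₂,p₃,p₄)`. -/
theorem statement3 (P : Set Pt) (hP : P.Finite) (hpent : ¬ HasEmptyPentagon P)
    (p₁ p₂ p₃ p₄ : Pt) (hsub : {p₁, p₂, p₃, p₄} ⊆ P)
    (hconv : StrictConvexCyclic [p₁, p₂, p₃, p₄])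
    (hempty : P ∩ convexHull ℝ {p₁, p₂, p₃, p₄} = {p₁, p₂, p₃, p₄}) :
    ¬ ∃ q ∈ P, StrictConvexCyclic [q, p₁, p₂, p₃, p₄] := by
  rintro ⟨q, hqP, hQ⟩
  rcases hQ with hccw | hccw
  · obtain ⟨x1, x2, x3, x4, x5, x6, x7, x8, x9, x10, x11, x12, x13, x14, x15⟩ :=
      Statement3Aux.ccw_ext hccw
    exact Statement3Aux.main P hP hpent p₁ p₂ p₃ p₄ hsub hempty q hqP
      x4 x5 (by rw [← Statement3Aux.tr_rot2 p₃ p₄ p₁]; exact x11) x7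
      x6 x8 x10 (by rw [Statement3Aux.tr_swap23]; linarith [x13])
  · have hrevlist : ([q, p₁, p₂, p₃, p₄] : List Pt).reverse = [p₄, p₃, p₂, p₁, q] := by simp
    rw [hrevlist] at hccw
    obtain ⟨x1, x2, x3, x4, x5, x6, x7, x8, x9, x10, x11, x12, x13, x14, x15⟩ :=
      Statement3Aux.ccw_ext hccw
    have hseteq : ({p₄, p₃, p₂, p₁} : Set Pt) = {p₁, p₂, p₃, p₄} := by
      ext y; simp; tauto
    exact Statement3Aux.main P hP hpent p₄ p₃ p₂ p₁ (by rw [hseteq]; exact hsub)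
      (by rw [hseteq]; exact hempty) q hqP
      x1 x2 (by rw [← Statement3Aux.tr_rot2 p₂ p₁ p₄]; exact x8) x4
      x3 x5 x7 (by rw [Statement3Aux.tr_swap23]; linarith [x10])
end

section
/- Let P be a finite set of points in ℝ², let m ≥ 3, and let A ⊆ P be a hull-minimal weakly convex m-gon in P with P ⊆ conv(A), so that A is the first convex layer of P; let B be the second convex layer of P and assume B ≠ ∅. Then for every edge b of B, |A ∩ b⁺| > |B ∩ l(b)|. More generally, for any edges b₁, …, b_j of B, |A ∩ (b₁⁺ ∪ ⋯ ∪ b_j⁺)| > |B ∩ (l(b₁) ∪ ⋯ ∪ l(b_j))|. -/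
open Set

lemma det2_affine (w u x y : Pt) (a b : ℝ) (hab : a + b = 1) :
    det2 w (a • x + b • y - u) = a * det2 w (x - u) + b * det2 w (y - u) := by
  have hb : b = 1 - a := by linarith
  subst hb
  simp only [det2, Prod.fst_sub, Prod.snd_sub, Prod.fst_add, Prod.snd_add,
    Prod.smul_fst, Prod.smul_snd, smul_eq_mul]
  ring

lemma convex_halfK (w u : Pt) : Convex ℝ {x : Pt | det2 w (x - u) ≤ 0} := by
  intro x hx y hy a b ha hb hab
  simp only [Set.mem_setOf_eq] at *
  rw [det2_affine w u x y a b hab]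
  nlinarith

lemma sq_pos_of_ne (w : Pt) (hw : w ≠ 0) : 0 < w.1^2 + w.2^2 := by
  by_contra h
  push_neg at h
  have h1 : w.1 ^ 2 = 0 := le_antisymm (by nlinarith [sq_nonneg w.2]) (by positivity)
  have h2 : w.2 ^ 2 = 0 := le_antisymm (by nlinarith [sq_nonneg w.1]) (by positivity)
  exact hw (Prod.ext (by simpa using (pow_eq_zero_iff two_ne_zero).mp h1)
    (by simpa using (pow_eq_zero_iff two_ne_zero).mp h2))

lemma not_mem_interior_halfK {w u : Pt} (hw : w ≠ 0) {p : Pt}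
    (hp : det2 w (p - u) = 0) {S : Set Pt}
    (hS : S ⊆ {x : Pt | det2 w (x - u) ≤ 0}) : p ∉ interior S := by
  intro hmem
  have h2 := interior_mono hS hmem
  rw [mem_interior_iff_mem_nhds, Metric.mem_nhds_iff] at h2
  obtain ⟨ε, hε, hball⟩ := h2
  set v : Pt := (-w.2, w.1) with hv
  have hnv : (0:ℝ) ≤ ‖v‖ := norm_nonneg v
  set t : ℝ := ε / (2 * (‖v‖ + 1)) with ht'
  have ht : 0 < t := by positivity
  have hq : p + t • v ∈ Metric.ball p ε := by
    rw [Metric.mem_ball, dist_eq_norm]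
    have h3 : p + t • v - p = t • v := by abel
    rw [h3, norm_smul, Real.norm_eq_abs, abs_of_pos ht]
    rw [ht', div_mul_eq_mul_div, div_lt_iff₀ (by positivity)]
    nlinarith
  have h4 := hball hq
  simp only [Set.mem_setOf_eq] at h4
  have hdet : det2 w (p + t • v - u) = t * (w.1^2 + w.2^2) := by
    simp only [det2, hv, Prod.fst_sub, Prod.snd_sub, Prod.fst_add, Prod.snd_add,
      Prod.smul_fst, Prod.smul_snd, smul_eq_mul] at hp ⊢
    ring_nf at hp ⊢
    linarith
  have := sq_pos_of_ne w hw
  nlinarith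
/-- (Observation 1.) If `A` is a hull-minimal weakly convex
`m`-gon in `P` with `P ⊆ conv A` and `B` is the second convex layer, then for
every edge `b` of `B`, `|A ∩ b⁺| > |B ∩ l(b)|`; more generally for any edges
`b₁, …, b_j` of `B`, `|A ∩ (b₁⁺ ∪ ⋯ ∪ b_j⁺)| > |B ∩ (l(b₁) ∪ ⋯ ∪ l(b_j))|`. -/
theorem statement4 (P : Set Pt) (hP : P.Finite) (m : ℕ) (hm : 3 ≤ m)
    (A : Set Pt) (hA : HullMinimalWeakGon P A m) (hPA : P ⊆ convexHull ℝ A)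
    (B : Set Pt) (hB : B = cLayer P 2) (hBne : B.Nonempty) :
    (∀ u v H, IsEdgeOf B u v → IsPosSide B u v H →
      (B ∩ lineThrough u v).ncard < (A ∩ H).ncard) ∧
    (∀ (j : ℕ) (e₁ e₂ : Fin j → Pt) (H : Fin j → Set Pt), 1 ≤ j →
      (∀ i, IsEdgeOf B (e₁ i) (e₂ i)) →
      (∀ i, IsPosSide B (e₁ i) (e₂ i) (H i)) →
      (B ∩ ⋃ i, lineThrough (e₁ i) (e₂ i)).ncard < (A ∩ ⋃ i, H i).ncard) := by
  obtain ⟨hAP, hAcard, hAconv, hAmin⟩ := hA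
  have hAfin : A.Finite := hP.subset hAP
  have hcl : cLayer P 2 = (P \ frontier (convexHull ℝ P)) ∩
      frontier (convexHull ℝ (P \ frontier (convexHull ℝ P))) := rfl
  have hBP : B ⊆ P := by
    rw [hB, hcl]; intro x hx; exact hx.1.1
  have hBfin : B.Finite := hP.subset hBP
  have hconvPA : convexHull ℝ P = convexHull ℝ A :=
    Set.Subset.antisymm (convexHull_min hPA (convex_convexHull ℝ A)) (convexHull_mono hAP)
  have hAclosed : IsClosed (convexHull ℝ A) := hAfin.isClosed_convexHull ℝ
  have hABdisj : ∀ x ∈ B, x ∉ A := by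
    intro x hx hxA
    have h1 : x ∈ frontier (convexHull ℝ A) := hAconv x hxA
    rw [hB, hcl] at hx
    exact hx.1.2 (by rw [hconvPA]; exact h1)
  have hBint : ∀ x ∈ B, x ∈ interior (convexHull ℝ A) := by
    intro x hx
    rw [hB, hcl] at hx
    have hxP : x ∈ P := hx.1.1
    have hxF : x ∉ frontier (convexHull ℝ A) := by
      intro h; exact hx.1.2 (by rw [hconvPA]; exact h)
    have hxconv : x ∈ convexHull ℝ A := hPA hxP
    rw [hAclosed.frontier_eq] at hxF
    by_contra h
    exact hxF ⟨hxconv, h⟩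
  have key : ∀ (j : ℕ) (e₁ e₂ : Fin j → Pt) (H : Fin j → Set Pt), 1 ≤ j →
      (∀ i, IsEdgeOf B (e₁ i) (e₂ i)) →
      (∀ i, IsPosSide B (e₁ i) (e₂ i) (H i)) →
      (B ∩ ⋃ i, lineThrough (e₁ i) (e₂ i)).ncard < (A ∩ ⋃ i, H i).ncard := by
    intro j e₁ e₂ H hj hedge hside
    have hW : ∀ i : Fin j, ∃ w : Pt, w ≠ 0 ∧
        (H i)ᶜ = {x : Pt | det2 w (x - e₁ i) ≤ 0} ∧
        (∀ x, x ∈ lineThrough (e₁ i) (e₂ i) → det2 w (x - e₁ i) = 0) := by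
      intro i
      obtain ⟨h1, h2, hne, _, _⟩ := hedge i
      obtain ⟨hHor, hHB⟩ := hside i
      have hsub : e₂ i - e₁ i ≠ 0 := sub_ne_zero.mpr (Ne.symm hne)
      rcases hHor with h | h
      · refine ⟨e₂ i - e₁ i, hsub, ?_, fun x hx => hx⟩
        rw [h]; ext x; simp [sidePos, not_lt]
      · refine ⟨e₁ i - e₂ i, sub_ne_zero.mpr hne, ?_, ?_⟩
        · rw [h]; ext x
          simp only [Set.mem_compl_iff, sideNeg, Set.mem_setOf_eq, not_lt, det2,
            Prod.fst_sub, Prod.snd_sub]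
          constructor <;> intro hh <;> nlinarith
        · intro x hx
          simp only [lineThrough, Set.mem_setOf_eq, det2, Prod.fst_sub, Prod.snd_sub] at hx ⊢
          nlinarith
    choose w hw0 hwH hwL using hW
    by_contra hcon
    push_neg at hcon
    set S : Set Pt := ⋃ i, H i with hS
    set L : Set Pt := ⋃ i, lineThrough (e₁ i) (e₂ i) with hL
    set A' : Set Pt := (A \ S) ∪ (B ∩ L) with hA'
    have hA'P : A' ⊆ P := by
      intro x hx
      rcases hx with hx | hx
      · exact hAP hx.1
      · exact hBP hx.1
    have hA'fin : A'.Finite := hP.subset hA'P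
    have hdisj : Disjoint (A \ S) (B ∩ L) := by
      rw [Set.disjoint_left]
      intro x hx hx2
      exact hABdisj x hx2.1 hx.1
    have hcard : A'.ncard = (A \ S).ncard + (B ∩ L).ncard :=
      Set.ncard_union_eq hdisj (hAfin.diff (t := S)) (hBfin.inter_of_left _)
    have hAsplit : (A ∩ S).ncard + (A \ S).ncard = A.ncard :=
      Set.ncard_inter_add_ncard_diff_eq_ncard A S hAfin
    have hcardge : m ≤ A'.ncard := by
      rw [hcard]; omega
    have hA'sub : A' ⊆ convexHull ℝ A := by
      intro x hx
      rcases hx with hx | hx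
      · exact subset_convexHull ℝ A hx.1
      · exact hPA (hBP hx.1)
    have hhull : convexHull ℝ A' ⊆ convexHull ℝ A :=
      convexHull_min hA'sub (convex_convexHull ℝ A)
    have hA'closed : IsClosed (convexHull ℝ A') := hA'fin.isClosed_convexHull ℝ
    have hA'K : ∀ i, convexHull ℝ A' ⊆ {x : Pt | det2 (w i) (x - e₁ i) ≤ 0} := by
      intro i
      apply convexHull_min _ (convex_halfK _ _)
      intro x hx
      rw [← hwH i]
      intro hxH
      rcases hx with hx | hx
      · exact hx.2 (Set.mem_iUnion.mpr ⟨i, hxH⟩)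
      · have hemp := (hside i).2
        exact absurd hemp (Set.nonempty_iff_ne_empty.mp ⟨x, hxH, hx.1⟩)
    have hwc : WeaklyConvexPos A' := by
      intro p hp
      have hpA' : p ∈ convexHull ℝ A' := subset_convexHull ℝ A' hp
      rw [hA'closed.frontier_eq]
      refine ⟨hpA', ?_⟩
      rcases hp with hp | hp
      · have h1 := hAconv p hp.1
        intro hint
        have h2 := interior_mono hhull hint
        rw [hAclosed.frontier_eq] at h1
        exact h1.2 h2
      · obtain ⟨Li, ⟨i, rfl⟩, hline⟩ := hp.2
        exact not_mem_interior_halfK (hw0 i) (hwL i p hline) (hA'K i)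
    have i0 : Fin j := ⟨0, hj⟩
    have hAH0 : ∃ a, a ∈ A ∩ H i0 := by
      by_contra h
      push_neg at h
      have hAK : convexHull ℝ A ⊆ {x : Pt | det2 (w i0) (x - e₁ i0) ≤ 0} := by
        apply convexHull_min _ (convex_halfK _ _)
        intro x hx
        rw [← hwH i0]
        intro hxH
        exact h x ⟨hx, hxH⟩
      have hu : e₁ i0 ∈ B := (hedge i0).1
      have h1 := hBint _ hu
      have h2 : det2 (w i0) (e₁ i0 - e₁ i0) = 0 := by simp [det2]
      exact not_mem_interior_halfK (hw0 i0) h2 hAK h1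
    obtain ⟨a, haA, haH⟩ := hAH0
    have hnotin : a ∉ convexHull ℝ A' := by
      intro hin
      have h1 := hA'K i0 hin
      have h2 : a ∈ (H i0)ᶜ := by rw [hwH i0]; exact h1
      exact h2 haH
    have hss : convexHull ℝ A' ⊂ convexHull ℝ A := by
      rw [Set.ssubset_def]
      refine ⟨hhull, fun hsub => hnotin (hsub (subset_convexHull ℝ A haA))⟩
    exact hAmin A' hA'P hA'fin hcardge hwc hss
  refine ⟨?_, key⟩
  intro u v H hedge hside
  have h := key 1 (fun _ => u) (fun _ => v) (fun _ => H) le_rfl (fun _ => hedge)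
    (fun _ => hside)
  simpa [Set.iUnion_const] using h
end

section
/- Let ℓ ≥ 2, and let P be a finite set of points in ℝ² with no ℓ collinear points and no empty pentagon. Let A ⊆ P be a hull-minimal weakly convex 8ℓ-gon in P with P ⊆ conv(A), so that A is the first convex layer of P, and let B be the second convex layer of P, with B ≠ ∅. Then for every edge b of B, the set A ∩ b⁺ is collinear (all its points lie on one line). -/
open Set

-- ===== auxiliary lemmas =====

lemma exists_smul_of_det_zero {v w : Pt} (hv : v ≠ 0) (h : det2 v w = 0) : ∃ t : ℝ, w = t • v := by
  simp only [det2] at h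
  rcases eq_or_ne v.1 0 with h1 | h1
  · have h2 : v.2 ≠ 0 := by
      intro h2; exact hv (Prod.ext h1 h2)
    refine ⟨w.2 / v.2, ?_⟩
    have : w.1 = w.2 / v.2 * v.1 := by
      field_simp
      nlinarith [h]
    exact Prod.ext (by simpa using this) (by rw [Prod.smul_snd, smul_eq_mul, div_mul_cancel₀ _ h2])
  · refine ⟨w.1 / v.1, ?_⟩
    have : w.2 = w.1 / v.1 * v.2 := by field_simp; nlinarith [h]
    exact Prod.ext (by rw [Prod.smul_fst, smul_eq_mul, div_mul_cancel₀ _ h1]) (by simpa using this)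

lemma collinear_triple_of_det {a b c : Pt} (h : det2 (b - a) (c - a) = 0) :
    Collinear ℝ ({a, b, c} : Set Pt) := by
  rcases eq_or_ne b a with rfl | hba
  · have heq : ({b, b, c} : Set Pt) = {b, c} := by simp
    rw [heq]; exact collinear_pair ℝ b c
  · have hv : b - a ≠ 0 := sub_ne_zero_of_ne hba
    obtain ⟨t, ht⟩ := exists_smul_of_det_zero hv h
    rw [collinear_iff_of_mem (show a ∈ ({a,b,c} : Set Pt) by simp)]
    refine ⟨b - a, ?_⟩
    rintro p hp
    rcases hp with h1 | h1 | h1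
    · exact ⟨0, by rw [h1]; simp⟩
    · exact ⟨1, by rw [h1]; simp⟩
    · refine ⟨t, ?_⟩
      rw [h1]
      have h2 : c = (c - a) + a := by abel
      rw [h2, ht]; rfl

lemma det_zero_of_collinear {a b c : Pt} (h : Collinear ℝ ({a, b, c} : Set Pt)) :
    det2 (b - a) (c - a) = 0 := by
  rw [collinear_iff_of_mem (show a ∈ ({a,b,c} : Set Pt) by simp)] at h
  obtain ⟨v, hv⟩ := h
  obtain ⟨s, hs⟩ := hv b (by simp)
  obtain ⟨t, ht⟩ := hv c (by simp)
  have hb : b - a = s • v := by rw [hs]; simp [vadd_eq_add]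
  have hc : c - a = t • v := by rw [ht]; simp [vadd_eq_add]
  rw [hb, hc]; simp [det2]; ring

lemma exists_noncollinear_triple {C : Set Pt} (h : ¬ Collinear ℝ C) :
    ∃ p ∈ C, ∃ q ∈ C, ∃ r ∈ C, ¬ Collinear ℝ ({p, q, r} : Set Pt) := by
  by_contra hall
  push_neg at hall
  apply h
  rcases C.subsingleton_or_nontrivial with hs | hnt
  · rcases hs.eq_empty_or_singleton with rfl | ⟨a, rfl⟩
    · exact collinear_empty ℝ Pt
    · exact collinear_singleton ℝ a
  · obtain ⟨p, hp, q, hq, hpq⟩ := hnt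
    rw [collinear_iff_of_mem hp]
    refine ⟨q - p, fun r hr => ?_⟩
    have := hall p hp q hq r hr
    have hd := det_zero_of_collinear this
    obtain ⟨t, ht⟩ := exists_smul_of_det_zero (sub_ne_zero_of_ne (Ne.symm hpq)) hd
    refine ⟨t, ?_⟩
    have : r = (r - p) + p := by abel
    rw [this, ht]; rfl

lemma det2_linpart (e : Pt) : IsLinearMap ℝ (fun x : Pt => e.1 * x.2 - e.2 * x.1) := by
  constructor
  · intro x y; simp [Prod.fst_add, Prod.snd_add]; ring
  · intro c x; simp [Prod.smul_fst, Prod.smul_snd, smul_eq_mul]; ring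

lemma det2_affine_s5 (e u x : Pt) :
    det2 e (x - u) = (e.1 * x.2 - e.2 * x.1) - (e.1 * u.2 - e.2 * u.1) := by
  simp [det2]; ring

lemma convex_det_le (e u : Pt) : Convex ℝ {x : Pt | det2 e (x - u) ≤ 0} := by
  have h := convex_halfSpace_le (det2_linpart e) (e.1 * u.2 - e.2 * u.1)
  have hs : {x : Pt | det2 e (x - u) ≤ 0} = {w : Pt | e.1 * w.2 - e.2 * w.1 ≤ e.1 * u.2 - e.2 * u.1} := by
    ext x; simp [det2_affine_s5, sub_nonpos]
  rw [hs]; exact h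

lemma convex_det_nonneg (e u : Pt) : Convex ℝ {x : Pt | 0 ≤ det2 e (x - u)} := by
  have h := convex_halfSpace_ge (det2_linpart e) (e.1 * u.2 - e.2 * u.1)
  have hs : {x : Pt | 0 ≤ det2 e (x - u)} = {w : Pt | e.1 * u.2 - e.2 * u.1 ≤ e.1 * w.2 - e.2 * w.1} := by
    ext x; simp [det2_affine_s5, sub_nonneg]
  rw [hs]; exact h

lemma det2_sum {e u : Pt} {S : Finset Pt} {w : Pt → ℝ} (hw : ∑ s ∈ S, w s = 1) :
    det2 e ((∑ s ∈ S, w s • s) - u) = ∑ s ∈ S, w s * det2 e (s - u) := by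
  have h1 : (∑ s ∈ S, w s • s).1 = ∑ s ∈ S, w s * s.1 := by
    rw [Prod.fst_sum]; apply Finset.sum_congr rfl; intros; simp [Prod.smul_fst]
  have h2 : (∑ s ∈ S, w s • s).2 = ∑ s ∈ S, w s * s.2 := by
    rw [Prod.snd_sum]; apply Finset.sum_congr rfl; intros; simp [Prod.smul_snd]
  have h3 : ∀ s ∈ S, w s * det2 e (s - u) =
      e.1 * (w s * s.2) - e.2 * (w s * s.1) - (e.1 * u.2 - e.2 * u.1) * w s := by
    intro s _; simp [det2]; ring
  rw [Finset.sum_congr rfl h3]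
  simp only [Finset.sum_sub_distrib, ← Finset.mul_sum, hw]
  simp only [det2, Prod.fst_sub, Prod.snd_sub, h1, h2]
  ring

lemma face_lemma {e u : Pt} {S : Finset Pt} {c : Pt}
    (hS : ∀ s ∈ S, 0 ≤ det2 e (s - u))
    (hc : c ∈ convexHull ℝ (S : Set Pt)) (h0 : det2 e (c - u) ≤ 0) :
    c ∈ convexHull ℝ ((S : Set Pt) ∩ {x | det2 e (x - u) = 0}) := by
  classical
  rw [Finset.convexHull_eq] at hc
  obtain ⟨w, hw0, hw1, hcm⟩ := hc
  rw [Finset.centerMass_eq_of_sum_1 _ _ hw1] at hcm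
  simp only [id] at hcm
  have hsum : det2 e (c - u) = ∑ s ∈ S, w s * det2 e (s - u) := by
    rw [← hcm]; exact det2_sum hw1
  have hge : ∀ s ∈ S, 0 ≤ w s * det2 e (s - u) :=
    fun s hs => mul_nonneg (hw0 s hs) (hS s hs)
  have hzero : ∀ s ∈ S, w s * det2 e (s - u) = 0 := by
    refine (Finset.sum_eq_zero_iff_of_nonneg hge).1 ?_
    exact le_antisymm (hsum ▸ h0) (Finset.sum_nonneg hge)
  set S' := S.filter (fun x => det2 e (x - u) = 0) with hS'
  have hwz : ∀ s ∈ S, s ∉ S' → w s = 0 := by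
    intro s hs hns
    rcases mul_eq_zero.1 (hzero s hs) with h | h
    · exact h
    · exact absurd (Finset.mem_filter.2 ⟨hs, h⟩) hns
  have hw1' : ∑ s ∈ S', w s = 1 := by
    rw [← hw1]
    exact Finset.sum_subset (Finset.filter_subset _ _) hwz
  have hcm' : ∑ s ∈ S', w s • s = c := by
    rw [← hcm]
    exact Finset.sum_subset (Finset.filter_subset _ _)
      (fun s hs hns => by rw [hwz s hs hns, zero_smul])
  have hmem : ∀ s ∈ S', (id s : Pt) ∈ ((S : Set Pt) ∩ {x | det2 e (x - u) = 0}) := by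
    intro s hs
    have hm := Finset.mem_filter.1 hs
    exact ⟨hm.1, hm.2⟩
  have h := Finset.centerMass_mem_convexHull S'
    (fun s hs => hw0 s (Finset.filter_subset _ _ hs)) (by rw [hw1']; norm_num) hmem
  rw [Finset.centerMass_eq_of_sum_1 _ _ hw1'] at h
  simp only [id] at h
  rwa [hcm'] at h

lemma combo3_mem_convex {K : Set Pt} (hK : Convex ℝ K) {x y z : Pt}
    (hx : x ∈ K) (hy : y ∈ K) (hz : z ∈ K) {a b c : ℝ}
    (ha : 0 ≤ a) (hb : 0 ≤ b) (hc : 0 ≤ c) (habc : a + b + c = 1) :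
    a • x + b • y + c • z ∈ K := by
  rcases eq_or_lt_of_le (add_nonneg ha hb) with h0 | h0
  · have ha0 : a = 0 := by linarith [(add_eq_zero_iff_of_nonneg ha hb).1 h0.symm]
    have hb0 : b = 0 := by linarith [(add_eq_zero_iff_of_nonneg ha hb).1 h0.symm]
    have hc1 : c = 1 := by linarith
    simp [ha0, hb0, hc1, hz]
  · set m := a + b with hm
    have hp : (a / m) • x + (b / m) • y ∈ K :=
      hK hx hy (div_nonneg ha h0.le) (div_nonneg hb h0.le) (by field_simp; exact hm.symm)
    have h2 : m • ((a / m) • x + (b / m) • y) + c • z ∈ K :=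
      hK hp hz h0.le hc (by linarith)
    have h3 : m • ((a / m) • x + (b / m) • y) + c • z = a • x + b • y + c • z := by
      rw [smul_add, smul_smul, smul_smul]
      rw [mul_div_cancel₀ _ (ne_of_gt h0), mul_div_cancel₀ _ (ne_of_gt h0)]
    rwa [h3] at h2

lemma mem_interior_of_pos_combo {K : Set Pt} (hK : Convex ℝ K) {x y z : Pt}
    (hx : x ∈ K) (hy : y ∈ K) (hz : z ∈ K)
    (hnc : det2 (y - x) (z - x) ≠ 0)
    {wx wy wz : ℝ} (hwx : 0 < wx) (hwy : 0 < wy) (hwz : 0 < wz)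
    (hsum : wx + wy + wz = 1) {c : Pt} (hc : wx • x + wy • y + wz • z = c) :
    c ∈ interior K := by
  set a : Pt := y - x with hadef
  set b : Pt := z - x with hbdef
  set Δ : ℝ := det2 a b with hΔ
  have hΔne : Δ ≠ 0 := hnc
  have hΔpos : 0 < |Δ| := abs_pos.2 hΔne
  set Ca : ℝ := (|a.1| + |a.2|) / |Δ| with hCa
  set Cb : ℝ := (|b.1| + |b.2|) / |Δ| with hCb
  have hCa0 : 0 ≤ Ca := div_nonneg (by positivity) hΔpos.le
  have hCb0 : 0 ≤ Cb := div_nonneg (by positivity) hΔpos.le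
  set wmin : ℝ := min wx (min wy wz) with hwmin
  have hwminpos : 0 < wmin := lt_min hwx (lt_min hwy hwz)
  set ε : ℝ := wmin / (2 * (Ca + Cb + 1)) with hε
  have hεpos : 0 < ε := by positivity
  rw [mem_interior]
  refine ⟨Metric.ball c ε, ?_, Metric.isOpen_ball, Metric.mem_ball_self hεpos⟩
  intro c' hc'
  set d : Pt := c' - c with hd
  have hdn : ‖d‖ < ε := by
    rw [hd, ← dist_eq_norm]
    exact Metric.mem_ball.1 hc'
  have hd1 : |d.1| ≤ ‖d‖ := by rw [← Real.norm_eq_abs]; exact norm_fst_le d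
  have hd2 : |d.2| ≤ ‖d‖ := by rw [← Real.norm_eq_abs]; exact norm_snd_le d
  set α : ℝ := det2 d b / Δ with hα
  set β : ℝ := det2 a d / Δ with hβ
  have hαb : |α| ≤ ‖d‖ * Cb := by
    rw [hα, abs_div]
    rw [div_le_iff₀ hΔpos]  -- |det2 d b| ≤ ‖d‖ * Cb * |Δ|
    have h1 : |det2 d b| ≤ ‖d‖ * (|b.1| + |b.2|) := by
      have : |det2 d b| ≤ |d.1| * |b.2| + |d.2| * |b.1| := by
        rw [det2]; calc |d.1 * b.2 - d.2 * b.1| ≤ |d.1 * b.2| + |d.2 * b.1| := abs_sub _ _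
        _ = |d.1| * |b.2| + |d.2| * |b.1| := by rw [abs_mul, abs_mul]
      nlinarith [abs_nonneg b.1, abs_nonneg b.2, norm_nonneg d]
    calc |det2 d b| ≤ ‖d‖ * (|b.1| + |b.2|) := h1
      _ = ‖d‖ * Cb * |Δ| := by rw [hCb]; field_simp
  have hβb : |β| ≤ ‖d‖ * Ca := by
    rw [hβ, abs_div]
    rw [div_le_iff₀ hΔpos]
    have h1 : |det2 a d| ≤ ‖d‖ * (|a.1| + |a.2|) := by
      have : |det2 a d| ≤ |a.1| * |d.2| + |a.2| * |d.1| := by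
        rw [det2]; calc |a.1 * d.2 - a.2 * d.1| ≤ |a.1 * d.2| + |a.2 * d.1| := abs_sub _ _
        _ = |a.1| * |d.2| + |a.2| * |d.1| := by rw [abs_mul, abs_mul]
      nlinarith [abs_nonneg a.1, abs_nonneg a.2, norm_nonneg d]
    calc |det2 a d| ≤ ‖d‖ * (|a.1| + |a.2|) := h1
      _ = ‖d‖ * Ca * |Δ| := by rw [hCa]; field_simp
  have hsmall : |α| + |β| < wmin / 2 := by
    have h1 : |α| + |β| ≤ ‖d‖ * (Ca + Cb) := by linarith
    have h2 : ‖d‖ * (Ca + Cb) < ε * (Ca + Cb + 1) := by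
      rcases eq_or_lt_of_le (add_nonneg hCa0 hCb0) with h3 | h3
      · rw [← h3]; simp; positivity
      · nlinarith [norm_nonneg d]
    have h4 : ε * (Ca + Cb + 1) = wmin / 2 := by rw [hε]; field_simp
    linarith
  have hcomb : d = α • a + β • b := by
    have key1 : det2 d b * a.1 + det2 a d * b.1 = d.1 * Δ := by
      rw [hΔ]; simp only [det2]; ring
    have key2 : det2 d b * a.2 + det2 a d * b.2 = d.2 * Δ := by
      rw [hΔ]; simp only [det2]; ring
    have hA : α * a.1 + β * b.1 = d.1 := by
      rw [hα, hβ, div_mul_eq_mul_div, div_mul_eq_mul_div, ← add_div, key1,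
        mul_div_assoc, div_self hΔne, mul_one]
    have hB : α * a.2 + β * b.2 = d.2 := by
      rw [hα, hβ, div_mul_eq_mul_div, div_mul_eq_mul_div, ← add_div, key2,
        mul_div_assoc, div_self hΔne, mul_one]
    exact Prod.ext (by simpa using hA.symm) (by simpa using hB.symm)
  have habs_α : |α| < wmin / 2 := by
    have := abs_nonneg β; linarith
  have habs_β : |β| < wmin / 2 := by
    have := abs_nonneg α; linarith
  have hwx' : 0 ≤ wx - α - β := by
    have h1 : wmin ≤ wx := min_le_left _ _
    have := le_abs_self α; have := le_abs_self β
    linarith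
  have hwy' : 0 ≤ wy + α := by
    have h1 : wmin ≤ wy := (min_le_right wx _).trans (min_le_left _ _)
    have := neg_abs_le α; linarith
  have hwz' : 0 ≤ wz + β := by
    have h1 : wmin ≤ wz := (min_le_right wx _).trans (min_le_right _ _)
    have := neg_abs_le β; linarith
  have hsum' : (wx - α - β) + (wy + α) + (wz + β) = 1 := by linarith
  have := combo3_mem_convex hK hx hy hz hwx' hwy' hwz' hsum'
  have heq : (wx - α - β) • x + (wy + α) • y + (wz + β) • z = c' := by
    have : c' = c + d := by rw [hd]; abel
    rw [this, ← hc, hcomb, hadef, hbdef]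
    simp only [smul_sub, sub_smul, add_smul]
    abel
  rwa [heq] at this

lemma extreme_of_subset {s t : Set Pt} {x : Pt} (hst : s ⊆ t)
    (hx : x ∈ Set.extremePoints ℝ t) (hxs : x ∈ s) : x ∈ Set.extremePoints ℝ s := by
  rw [mem_extremePoints] at hx ⊢
  exact ⟨hxs, fun y hy z hz hseg => hx.2 y (hst hy) z (hst hz) hseg⟩

lemma extreme_insert_of_not_mem {S : Set Pt} (hS : S.Nonempty) {x : Pt}
    (hx : x ∉ convexHull ℝ S) :
    x ∈ Set.extremePoints ℝ (convexHull ℝ (insert x S)) := by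
  rw [mem_extremePoints]
  refine ⟨subset_convexHull ℝ _ (mem_insert x S), ?_⟩
  intro y hy z hz hseg
  rw [convexHull_insert hS, mem_convexJoin] at hy hz
  obtain ⟨x₁, hx₁, y', hy', hyseg⟩ := hy
  obtain ⟨x₂, hx₂, z', hz', hzseg⟩ := hz
  rw [mem_singleton_iff] at hx₁ hx₂
  rw [hx₁] at hyseg
  rw [hx₂] at hzseg
  obtain ⟨a, a', ha, ha', haa, hyeq⟩ := hyseg
  obtain ⟨b, b', hb, hb', hbb, hzeq⟩ := hzseg
  obtain ⟨t, t', ht, ht', htt, hxeq⟩ := hseg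
  have key : (t * a' + t' * b') • x = (t * a') • y' + (t' * b') • z' := by
    have h1 : t • y + t' • z = x := hxeq
    rw [← hyeq, ← hzeq] at h1
    have h2 : (t * a + t' * b) • x + ((t * a') • y' + (t' * b') • z') = x := by
      linear_combination (norm := module) h1
    have h3 : t * a + t' * b = 1 - (t * a' + t' * b') := by
      have ha2 : a = 1 - a' := by linarith
      have hb2 : b = 1 - b' := by linarith
      have ht2 : t' = 1 - t := by linarith
      rw [ha2, hb2, ht2]; ring
    rw [h3] at h2
    linear_combination (norm := module) -h2
  set m : ℝ := t * a' + t' * b' with hm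
  have hm0 : 0 ≤ m := by positivity
  rcases eq_or_lt_of_le hm0 with hmz | hmpos
  · have h1 : t * a' = 0 ∧ t' * b' = 0 := by constructor <;> nlinarith
    have ha'0 : a' = 0 := by
      rcases mul_eq_zero.1 h1.1 with h | h
      · exact absurd h (ne_of_gt ht)
      · exact h
    have hb'0 : b' = 0 := by
      rcases mul_eq_zero.1 h1.2 with h | h
      · exact absurd h (ne_of_gt ht')
      · exact h
    have hyx : y = x := by
      rw [← hyeq, ha'0, show a = 1 by linarith]; simp
    have hzx : z = x := by
      rw [← hzeq, hb'0, show b = 1 by linarith]; simp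
    exact ⟨hyx, hzx⟩
  · exfalso
    apply hx
    have hxc : x = (m⁻¹ * (t * a')) • y' + (m⁻¹ * (t' * b')) • z' := by
      have h5 := congrArg (fun w : Pt => m⁻¹ • w) key
      simp only [smul_smul, smul_add] at h5
      rw [inv_mul_cancel₀ (ne_of_gt hmpos), one_smul] at h5
      exact h5
    rw [hxc]
    refine (convex_convexHull ℝ S) hy' hz' (by positivity) (by positivity) ?_
    rw [← mul_add, hm]
    field_simp
    exact div_self (ne_of_gt hmpos)
  
lemma subset_convexHull_frontier {Q : Set Pt} (hQ : Q.Finite) :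
    Q ⊆ convexHull ℝ (Q ∩ frontier (convexHull ℝ Q)) := by
  set K' := convexHull ℝ Q with hK'
  have hcomp : IsCompact K' := hQ.isCompact_convexHull ℝ
  have hconv : Convex ℝ K' := convex_convexHull ℝ Q
  have hKM : closure (convexHull ℝ (K'.extremePoints ℝ)) = K' :=
    closure_convexHull_extremePoints hcomp hconv
  have hsub : K'.extremePoints ℝ ⊆ Q := extremePoints_convexHull_subset
  have hfin : (K'.extremePoints ℝ).Finite := hQ.subset hsub
  have hclosed : IsClosed (convexHull ℝ (K'.extremePoints ℝ)) := hfin.isClosed_convexHull ℝ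
  have hKM' : convexHull ℝ (K'.extremePoints ℝ) = K' := by
    have h := hKM
    rw [hclosed.closure_eq] at h
    exact h
  have hfr : K'.extremePoints ℝ ⊆ frontier K' := by
    intro p hp
    have hpK : p ∈ K' := hp.1
    rw [frontier, hcomp.isClosed.closure_eq]
    refine ⟨hpK, fun hint => ?_⟩
    rw [mem_interior_iff_mem_nhds, Metric.mem_nhds_iff] at hint
    obtain ⟨ε, hε, hball⟩ := hint
    set d : Pt := (ε/2, 0) with hd
    have hdn : ‖d‖ = ε/2 := by
      rw [hd, Prod.norm_def]
      simp only [Real.norm_eq_abs]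
      rw [abs_of_pos (half_pos hε)]
      simp
      linarith
    have h1 : p + d ∈ K' := by
      apply hball
      rw [Metric.mem_ball, dist_eq_norm, add_sub_cancel_left, hdn]
      linarith
    have h2 : p - d ∈ K' := by
      apply hball
      rw [Metric.mem_ball, dist_eq_norm, sub_sub_cancel_left, norm_neg, hdn]
      linarith
    have hseg : p ∈ openSegment ℝ (p - d) (p + d) := by
      show ∃ a b : ℝ, 0 < a ∧ 0 < b ∧ a + b = 1 ∧ a • (p - d) + b • (p + d) = p
      exact ⟨1/2, 1/2, by norm_num, by norm_num, by norm_num, by module⟩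
    have hext := (mem_extremePoints.1 hp).2 _ h2 _ h1 hseg
    have hd0 : d = 0 := by
      have h3 : p - d = p := hext.1
      have h4 := congrArg (fun w => p - w) h3
      simpa using h4
    rw [hd, Prod.ext_iff] at hd0
    simp at hd0
    linarith
  intro q hq
  have hqK : q ∈ K' := subset_convexHull ℝ Q hq
  rw [← hKM'] at hqK
  have hss : K'.extremePoints ℝ ⊆ Q ∩ frontier (convexHull ℝ Q) :=
    fun p hp => ⟨hsub hp, hfr hp⟩
  exact convexHull_mono hss hqK


lemma star_segment {K : Set Pt} (hK : Convex ℝ K) {S : Finset Pt}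
    (hSK : ∀ s ∈ S, (s : Pt) ∈ K) {c : Pt}
    (hc : c ∈ convexHull ℝ (S : Set Pt)) (hcI : c ∉ interior K) :
    ∃ x ∈ S, ∃ y ∈ S, c ∈ segment ℝ x y := by
  classical
  rw [Finset.convexHull_eq] at hc
  obtain ⟨w, hw0, hw1, hcm⟩ := hc
  rw [Finset.centerMass_eq_of_sum_1 _ _ hw1] at hcm
  simp only [id] at hcm
  set T := S.filter (fun s => 0 < w s) with hT
  have hTsub : T ⊆ S := Finset.filter_subset _ _
  have hwz : ∀ s ∈ S, s ∉ T → w s = 0 := by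
    intro s hs hns
    by_contra h
    exact hns (Finset.mem_filter.2 ⟨hs, lt_of_le_of_ne (hw0 s hs) (Ne.symm h)⟩)
  have hw1T : ∑ s ∈ T, w s = 1 := by
    rw [← hw1]; exact Finset.sum_subset hTsub hwz
  have hcmT : ∑ s ∈ T, w s • s = c := by
    rw [← hcm]
    exact Finset.sum_subset hTsub (fun s hs hns => by rw [hwz s hs hns, zero_smul])
  have hwTpos : ∀ s ∈ T, 0 < w s := fun s hs => (Finset.mem_filter.1 hs).2
  have hTK : ∀ s ∈ T, (s : Pt) ∈ K := fun s hs => hSK s (hTsub hs)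
  have hTne : T.Nonempty := by
    rcases T.eq_empty_or_nonempty with h | h
    · rw [h] at hw1T; simp at hw1T
    · exact h
  have hcol : Collinear ℝ (T : Set Pt) := by
    by_contra hnc
    obtain ⟨x, hx, y, hy, z, hz, hxyz⟩ := exists_noncollinear_triple hnc
    rw [Finset.mem_coe] at hx hy hz
    have hdet : det2 (y - x) (z - x) ≠ 0 := fun h => hxyz (collinear_triple_of_det h)
    have hxyne : x ≠ y := by
      rintro rfl
      refine hxyz ?_
      have heq : ({x, x, z} : Set Pt) = {x, z} := by simp
      rw [heq]; exact collinear_pair ℝ x z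
    have hxzne : x ≠ z := by
      rintro rfl
      refine hxyz ?_
      have heq : ({x, y, x} : Set Pt) = {x, y} := by
        ext p; simp; tauto
      rw [heq]; exact collinear_pair ℝ x y
    have hyzne : y ≠ z := by
      rintro rfl
      refine hxyz ?_
      have heq : ({x, y, y} : Set Pt) = {x, y} := by simp
      rw [heq]; exact collinear_pair ℝ x y
    set T' := ((T.erase x).erase y).erase z with hT'
    have hT'T : T' ⊆ T :=
      (Finset.erase_subset _ _).trans ((Finset.erase_subset _ _).trans (Finset.erase_subset _ _))
    have hsplit : ∑ s ∈ T, w s • s =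
        w x • x + w y • y + w z • z + ∑ s ∈ T', w s • s := by
      rw [hT']
      rw [← Finset.add_sum_erase _ _ hx]
      rw [← Finset.add_sum_erase _ _ (Finset.mem_erase.2 ⟨Ne.symm hxyne, hy⟩)]
      rw [← Finset.add_sum_erase _ _ (Finset.mem_erase.2 ⟨Ne.symm hyzne,
        Finset.mem_erase.2 ⟨Ne.symm hxzne, hz⟩⟩)]
      abel
    have hsplitw : ∑ s ∈ T, w s = (w x + w y + w z) + ∑ s ∈ T', w s := by
      rw [hT']
      rw [← Finset.add_sum_erase _ _ hx]
      rw [← Finset.add_sum_erase _ _ (Finset.mem_erase.2 ⟨Ne.symm hxyne, hy⟩)]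
      rw [← Finset.add_sum_erase _ _ (Finset.mem_erase.2 ⟨Ne.symm hyzne,
        Finset.mem_erase.2 ⟨Ne.symm hxzne, hz⟩⟩)]
      ring
    set σ : ℝ := w x + w y + w z with hσ
    have hσpos : 0 < σ := by
      have h1 := hwTpos x hx; have h2 := hwTpos y hy; have h3 := hwTpos z hz
      rw [hσ]; linarith
    set s₀ : ℝ := ∑ s ∈ T', w s with hs₀
    have hs₀nn : 0 ≤ s₀ :=
      Finset.sum_nonneg (fun s hs => hw0 s (hTsub (hT'T hs)))
    have hσs : σ + s₀ = 1 := by rw [← hw1T, hsplitw]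
    set c₁ : Pt := (w x / σ) • x + (w y / σ) • y + (w z / σ) • z with hc₁
    have hc₁int : c₁ ∈ interior K := by
      refine mem_interior_of_pos_combo hK (hTK x hx) (hTK y hy) (hTK z hz) hdet
        (div_pos (hwTpos x hx) hσpos) (div_pos (hwTpos y hy) hσpos)
        (div_pos (hwTpos z hz) hσpos) ?_ rfl
      field_simp
      exact hσ.symm
    rcases eq_or_lt_of_le hs₀nn with h0 | h0
    · have hσ1 : σ = 1 := by linarith
      have hT'z : ∑ s ∈ T', w s • s = 0 := by
        refine Finset.sum_eq_zero (fun s hs => ?_)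
        have hzero : w s = 0 := by
          by_contra hne
          have hpos := hwTpos s (hT'T hs)
          have hle : w s ≤ s₀ :=
            Finset.single_le_sum (fun t ht => hw0 t (hTsub (hT'T ht))) hs
          linarith
        rw [hzero, zero_smul]
      have hcc : c = c₁ := by
        rw [← hcmT, hsplit, hT'z, add_zero, hc₁, hσ1]
        simp
      rw [hcc] at hcI
      exact hcI hc₁int
    · set q : Pt := s₀⁻¹ • ∑ s ∈ T', w s • s with hq
      have hqK : q ∈ K := by
        have hmem := Finset.centerMass_mem_convexHull T'
          (fun s hs => hw0 s (hTsub (hT'T hs)))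
          (show 0 < ∑ s ∈ T', w s from h0)
          (fun s hs => Finset.mem_coe.2 hs)
        have hcm' : (T'.centerMass w fun s => s) = q := by
          rw [Finset.centerMass, hq, ← hs₀]
        rw [hcm'] at hmem
        exact convexHull_min (fun s hs => hTK s (hT'T (Finset.mem_coe.1 hs))) hK hmem
      have hco : c = σ • c₁ + s₀ • q := by
        rw [← hcmT, hsplit, hc₁, hq]
        rw [smul_inv_smul₀ (ne_of_gt h0)]
        congr 1
        rw [smul_add, smul_add, smul_smul, smul_smul, smul_smul]
        rw [mul_div_cancel₀ _ (ne_of_gt hσpos), mul_div_cancel₀ _ (ne_of_gt hσpos),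
          mul_div_cancel₀ _ (ne_of_gt hσpos)]
      have hcopen : c ∈ openSegment ℝ c₁ q := by
        show ∃ a b : ℝ, 0 < a ∧ 0 < b ∧ a + b = 1 ∧ a • c₁ + b • q = c
        exact ⟨σ, s₀, hσpos, h0, hσs, hco.symm⟩
      exact hcI (hK.openSegment_interior_closure_subset_interior hc₁int
        (subset_closure hqK) hcopen)
  obtain ⟨p₀, hp₀⟩ := hTne
  have hp₀' : (p₀ : Pt) ∈ (T : Set Pt) := Finset.mem_coe.2 hp₀
  rw [collinear_iff_of_mem hp₀'] at hcol
  obtain ⟨v, hv⟩ := hcol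
  set r : Pt → ℝ := fun s => if h : ∃ t : ℝ, s = t • v +ᵥ p₀ then h.choose else 0 with hrdef
  have hr : ∀ s ∈ T, s = r s • v + p₀ := by
    intro s hs
    have h := hv s (Finset.mem_coe.2 hs)
    rw [hrdef]
    simp only [dif_pos h]
    have := h.choose_spec
    rw [vadd_eq_add] at this
    exact this
  set R : ℝ := ∑ s ∈ T, w s * r s with hR
  have hcR : c = R • v + p₀ := by
    have hterm : ∀ s ∈ T, w s • s = (w s * r s) • v + w s • p₀ := by
      intro s hs
      nth_rewrite 2 [hr s hs]
      module
    rw [← hcmT, Finset.sum_congr rfl hterm, Finset.sum_add_distrib,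
      ← Finset.sum_smul, ← Finset.sum_smul, hw1T, one_smul, ← hR]
  have hex : ∃ x ∈ T, r x ≤ R := by
    by_contra h
    push_neg at h
    have hlt : ∑ s ∈ T, w s * R < ∑ s ∈ T, w s * r s := by
      refine Finset.sum_lt_sum_of_nonempty ⟨p₀, hp₀⟩ (fun s hs => ?_)
      have h1 := hwTpos s hs
      have h2 := h s hs
      nlinarith
    rw [← Finset.sum_mul, hw1T, one_mul, ← hR] at hlt
    exact lt_irrefl _ hlt
  have hey : ∃ y ∈ T, R ≤ r y := by
    by_contra h
    push_neg at h
    have hlt : ∑ s ∈ T, w s * r s < ∑ s ∈ T, w s * R := by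
      refine Finset.sum_lt_sum_of_nonempty ⟨p₀, hp₀⟩ (fun s hs => ?_)
      have h1 := hwTpos s hs
      have h2 := h s hs
      nlinarith
    rw [← Finset.sum_mul, hw1T, one_mul, ← hR] at hlt
    exact lt_irrefl _ hlt
  obtain ⟨x, hxT, hxR⟩ := hex
  obtain ⟨y, hyT, hyR⟩ := hey
  refine ⟨x, hTsub hxT, y, hTsub hyT, ?_⟩
  show ∃ a b : ℝ, 0 ≤ a ∧ 0 ≤ b ∧ a + b = 1 ∧ a • x + b • y = c
  rcases eq_or_lt_of_le (hxR.trans hyR) with heq | hlt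
  · have hRx : R = r x := by linarith
    refine ⟨1, 0, zero_le_one, le_refl 0, by norm_num, ?_⟩
    rw [hcR, hr x hxT, ← hRx]
    module
  · set θ : ℝ := (R - r x) / (r y - r x) with hθ
    have hδ : 0 < r y - r x := by linarith
    have hθ0 : 0 ≤ θ := div_nonneg (by linarith) hδ.le
    have hθ1 : θ ≤ 1 := by
      rw [hθ, div_le_one hδ]; linarith
    refine ⟨1 - θ, θ, by linarith, hθ0, by ring, ?_⟩
    rw [hcR, hr x hxT, hr y hyT]
    have hscal : (1 - θ) * r x + θ * r y = R := by
      have h1 : θ * (r y - r x) = R - r x := by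
        rw [hθ]; field_simp
      nlinarith [h1]
    linear_combination (norm := module) hscal • v


lemma noncollinear_distinct {p q r : Pt} (h : ¬Collinear ℝ ({p, q, r} : Set Pt)) :
    p ≠ q ∧ p ≠ r ∧ q ≠ r := by
  refine ⟨?_, ?_, ?_⟩
  · intro he
    refine h ?_
    have heq : ({p, q, r} : Set Pt) = {q, r} := by rw [he]; simp
    rw [heq]; exact collinear_pair ℝ q r
  · intro he
    refine h ?_
    have heq : ({p, q, r} : Set Pt) = {p, q} := by
      rw [← he]; ext w; simp; tauto
    rw [heq]; exact collinear_pair ℝ p q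
  · intro he
    refine h ?_
    have heq : ({p, q, r} : Set Pt) = {p, q} := by rw [← he]; simp
    rw [heq]; exact collinear_pair ℝ p q

lemma collinear_of_mem_segment {x y c : Pt} (h : c ∈ segment ℝ x y) :
    Collinear ℝ ({x, y, c} : Set Pt) := by
  obtain ⟨a, b, ha, hb, hab, hc⟩ := h
  apply collinear_triple_of_det
  have hb1 : b = 1 - a := by linarith
  rw [hb1] at hc
  rw [← hc]
  simp only [det2, Prod.fst_sub, Prod.snd_sub, Prod.fst_add, Prod.snd_add,
    Prod.smul_fst, Prod.smul_snd, smul_eq_mul]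
  ring

lemma exchange_noncollinear {x y z c : Pt} (hnc : ¬Collinear ℝ ({x, y, z} : Set Pt))
    (hc : c ∈ openSegment ℝ x y) : ¬Collinear ℝ ({c, y, z} : Set Pt) := by
  intro h
  apply hnc
  obtain ⟨a, b, ha, hb, hab, hceq⟩ := hc
  have hd := det_zero_of_collinear h
  apply collinear_triple_of_det
  have hb1 : b = 1 - a := by linarith
  rw [hb1] at hceq
  rw [← hceq] at hd
  -- hd : det2 (y - (a•x + (1-a)•y)) (z - (a•x + (1-a)•y)) = 0
  have hkey : det2 (y - (a • x + (1 - a) • y)) (z - (a • x + (1 - a) • y)) =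
      a * det2 (y - x) (z - x) := by
    simp only [det2, Prod.fst_sub, Prod.snd_sub, Prod.fst_add, Prod.snd_add,
      Prod.smul_fst, Prod.smul_snd, smul_eq_mul]
    ring
  rw [hkey] at hd
  rcases mul_eq_zero.1 hd with h1 | h1
  · exact absurd h1 (ne_of_gt ha)
  · exact h1

lemma seg_reduce {K : Set Pt} (hKc : IsClosed K) (hKconv : Convex ℝ K) {u v c x y : Pt}
    (huI : u ∈ interior K) (hvI : v ∈ interior K)
    (hφc : 0 < det2 (v - u) (c - u)) (hcI : c ∉ interior K)
    (hseg : c ∈ segment ℝ x y)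
    (hx : x = u ∨ x = v ∨ x ∈ frontier K) (hy : y = u ∨ y = v ∨ y ∈ frontier K) :
    (c = x ∨ c = y) ∨ (x ∈ frontier K ∧ y ∈ frontier K) := by
  have hmix : ∀ a b : Pt, a ∈ interior K → b ∈ K → c ∈ segment ℝ a b → c = b := by
    intro a b haI hbK hcs
    rcases eq_or_ne c b with h | hcb
    · exact h
    exfalso; apply hcI
    rcases eq_or_ne c a with h | hca
    · rw [h]; exact haI
    · have hop := mem_openSegment_of_ne_left_right (Ne.symm hca) (Ne.symm hcb) hcs
      exact hKconv.openSegment_interior_closure_subset_interior haI (subset_closure hbK) hop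
  have hfrK : ∀ w : Pt, w ∈ frontier K → w ∈ K := fun w hw => hKc.frontier_subset hw
  have hφu : det2 (v - u) (u - u) = 0 := by simp [det2]
  have hφv : det2 (v - u) (v - u) = 0 := by rw [det2]; ring
  have huvline : ∀ a b : Pt, det2 (v - u) (a - u) ≤ 0 → det2 (v - u) (b - u) ≤ 0 →
      c ∈ segment ℝ a b → False := by
    intro a b ha hb hcs
    have hmem := (convex_det_le (v - u) u).segment_subset ha hb hcs
    exact absurd hφc (not_lt.2 hmem)
  rcases hx with hxu | hxv | hxF
  · rcases hy with hyu | hyv | hyF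
    · rw [hxu, hyu, segment_same] at hseg
      left; left; rw [hxu]; exact hseg
    · rw [hxu, hyv] at hseg
      exact (huvline u v hφu.le hφv.le hseg).elim
    · rw [hxu] at hseg
      left; right; exact hmix u y huI (hfrK y hyF) hseg
  · rcases hy with hyu | hyv | hyF
    · rw [hxv, hyu] at hseg
      exact (huvline v u hφv.le hφu.le hseg).elim
    · rw [hxv, hyv, segment_same] at hseg
      left; left; rw [hxv]; exact hseg
    · rw [hxv] at hseg
      left; right; exact hmix v y hvI (hfrK y hyF) hseg
  · rcases hy with hyu | hyv | hyF
    · rw [hyu, segment_symm] at hseg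
      left; left; exact hmix u x huI (hfrK x hxF) hseg
    · rw [hyv, segment_symm] at hseg
      left; left; exact hmix v x hvI (hfrK x hxF) hseg
    · right; exact ⟨hxF, hyF⟩


lemma layerRest_one (P : Set Pt) : layerRest P 1 = P \ frontier (convexHull ℝ P) := rfl

lemma cLayer_two (P : Set Pt) :
    cLayer P 2 = layerRest P 1 ∩ frontier (convexHull ℝ (layerRest P 1)) := rfl

lemma seg_triple_case {a b c x' y' : Pt} (hncol : ¬Collinear ℝ ({a, b, c} : Set Pt))
    (hab : a ≠ b) (hac : a ≠ c)
    (hx : x' = b ∨ x' = c) (hy : y' = b ∨ y' = c) (hseg : a ∈ segment ℝ x' y') : False := by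
  rcases hx with h3 | h3 <;> rcases hy with h4 | h4 <;> rw [h3, h4] at hseg
  · rw [segment_same] at hseg; exact hab hseg
  · have h2 := collinear_of_mem_segment hseg
    have heq : ({b, c, a} : Set Pt) = ({a, b, c} : Set Pt) := by
      ext w; simp; tauto
    rw [heq] at h2
    exact hncol h2
  · have h2 := collinear_of_mem_segment hseg
    have heq : ({c, b, a} : Set Pt) = ({a, b, c} : Set Pt) := by
      ext w; simp; tauto
    rw [heq] at h2
    exact hncol h2
  · rw [segment_same] at hseg; exact hac hseg

lemma ins5_v (u v p q r : Pt) : ({u, v, p, q, r} : Set Pt) = insert v {u, p, q, r} := by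
  ext w; simp; tauto

lemma ins5_p (u v p q r : Pt) : ({u, v, p, q, r} : Set Pt) = insert p {u, v, q, r} := by
  ext w; simp; tauto

lemma ins5_q (u v p q r : Pt) : ({u, v, p, q, r} : Set Pt) = insert q {u, v, p, r} := by
  ext w; simp; tauto

lemma ins5_r (u v p q r : Pt) : ({u, v, p, q, r} : Set Pt) = insert r {u, v, p, q} := by
  ext w; simp; tauto

lemma set3_perm_acb (p q r : Pt) : ({p, r, q} : Set Pt) = {p, q, r} := by
  ext w; simp; tauto

lemma set3_perm_bca (p q r : Pt) : ({q, r, p} : Set Pt) = {p, q, r} := by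
  ext w; simp; tauto

lemma set3_perm_cba (p q r : Pt) : ({r, q, p} : Set Pt) = {p, q, r} := by
  ext w; simp; tauto

lemma set3_perm_bac (p q r : Pt) : ({q, p, r} : Set Pt) = {p, q, r} := by
  ext w; simp; tauto

lemma set3_perm_cab (p q r : Pt) : ({r, p, q} : Set Pt) = {p, q, r} := by
  ext w; simp; tauto

lemma collinear_posSide {P : Set Pt} (hP : P.Finite) (hpent : ¬ HasEmptyPentagon P)
    {B : Set Pt} (hB : B = cLayer P 2) {u v : Pt} (he : IsEdgeOf B u v)
    (hHB : sidePos u v ∩ B = ∅) :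
    Collinear ℝ (P ∩ sidePos u v) := by
  classical
  set K := convexHull ℝ P with hK
  have hKconv : Convex ℝ K := convex_convexHull ℝ P
  have hKcl : IsClosed K := hP.isClosed_convexHull ℝ
  set Q : Set Pt := P \ frontier K with hQdef
  have hB2 : B = Q ∩ frontier (convexHull ℝ Q) := by
    rw [hB, cLayer_two, layerRest_one, hQdef, hK]
  have hQP : Q ⊆ P := diff_subset
  have hQfin : Q.Finite := hP.subset hQP
  have hBQ : B ⊆ Q := by rw [hB2]; exact inter_subset_left
  have hBP : B ⊆ P := hBQ.trans hQP
  have hQB : Q ⊆ convexHull ℝ B := by rw [hB2]; exact subset_convexHull_frontier hQfin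
  have hconvBQ : convexHull ℝ B = convexHull ℝ Q :=
    le_antisymm (convexHull_mono hBQ) (convexHull_min hQB (convex_convexHull ℝ B))
  obtain ⟨huB, hvB, huv, hsegfr, hopen⟩ := he
  have hmemI : ∀ w ∈ B, w ∈ interior K := by
    intro w hw
    have hwQ := hBQ hw
    rw [hQdef] at hwQ
    have hwK : w ∈ K := subset_convexHull ℝ P hwQ.1
    by_contra hint
    exact hwQ.2 (by rw [hKcl.frontier_eq]; exact ⟨hwK, hint⟩)
  have huI := hmemI u huB
  have hvI := hmemI v hvB
  have hφB : ∀ b ∈ B, det2 (v - u) (b - u) ≤ 0 := by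
    intro b hb
    by_contra h
    push_neg at h
    have : b ∈ sidePos u v ∩ B := ⟨h, hb⟩
    rw [hHB] at this
    exact this
  have hconvB_le : convexHull ℝ B ⊆ {x : Pt | det2 (v - u) (x - u) ≤ 0} :=
    convexHull_min hφB (convex_det_le _ _)
  have hCfr : ∀ z ∈ P, 0 < det2 (v - u) (z - u) → z ∈ frontier K := by
    intro z hz hφz
    by_contra hzf
    have hzQ : z ∈ Q := ⟨hz, hzf⟩
    have h1 : z ∈ convexHull ℝ Q := subset_convexHull ℝ Q hzQ
    rw [← hconvBQ] at h1
    exact absurd hφz (not_lt.2 (hconvB_le h1))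
  have hsegline : ∀ z ∈ P, z ∈ openSegment ℝ u v → False := by
    intro z hz hzseg
    have hzI : z ∈ interior K :=
      hKconv.openSegment_interior_closure_subset_interior huI
        (subset_closure (interior_subset hvI)) hzseg
    have hzQ : z ∈ Q := by
      refine ⟨hz, ?_⟩
      rw [hKcl.frontier_eq]
      rintro ⟨_, h2⟩
      exact h2 hzI
    have hzB : z ∈ B := by
      rw [hB2]
      refine ⟨hzQ, ?_⟩
      rw [← hconvBQ]
      exact hsegfr (openSegment_subset_segment ℝ u v hzseg)
    have : z ∈ openSegment ℝ u v ∩ B := ⟨hzseg, hzB⟩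
    rw [hopen] at this
    exact this
  by_contra hnc
  set C : Set Pt := P ∩ sidePos u v with hCdef
  have hCfin : C.Finite := hP.subset inter_subset_left
  have hCP : C ⊆ P := inter_subset_left
  have hCφ : ∀ c ∈ C, 0 < det2 (v - u) (c - u) := fun c hc => hc.2
  have hCfront : ∀ c ∈ C, c ∈ frontier K := fun c hc => hCfr c hc.1 hc.2
  have hCnint : ∀ c ∈ C, c ∉ interior K := by
    intro c hc hint
    have h1 := hCfront c hc
    rw [hKcl.frontier_eq] at h1
    exact h1.2 hint
  have hCK : ∀ c ∈ C, c ∈ K := fun c hc => subset_convexHull ℝ P (hCP hc)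
  have hφu0 : det2 (v - u) (u - u) = 0 := by simp [det2]
  have hφv0 : det2 (v - u) (v - u) = 0 := by rw [det2]; ring
  have hCne_u : ∀ c ∈ C, c ≠ u := by
    intro c hc h
    have h1 := hCφ c hc
    rw [h, hφu0] at h1
    exact lt_irrefl 0 h1
  have hCne_v : ∀ c ∈ C, c ≠ v := by
    intro c hc h
    have h1 := hCφ c hc
    rw [h, hφv0] at h1
    exact lt_irrefl 0 h1
  -- not in convex hull of {u,v} and two others: key extremality fact
  have hnotin3 : ∀ a b c : Pt, a ∈ C → b ∈ C → c ∈ C → ¬Collinear ℝ ({a, b, c} : Set Pt) →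
      a ∉ convexHull ℝ ({u, v, b, c} : Set Pt) := by
    intro a b c ha hb hc hncol hmem
    obtain ⟨hab, hac, hbc⟩ := noncollinear_distinct hncol
    have hcoe : ((({u, v, b, c} : Finset Pt)) : Set Pt) = ({u, v, b, c} : Set Pt) := by simp
    have hSK : ∀ s ∈ ({u, v, b, c} : Finset Pt), (s : Pt) ∈ K := by
      intro s hs
      simp only [Finset.mem_insert, Finset.mem_singleton] at hs
      rcases hs with h1 | h1 | h1 | h1 <;> rw [h1]
      · exact interior_subset huI
      · exact interior_subset hvI
      · exact hCK b hb
      · exact hCK c hc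
    obtain ⟨x, hxS, y, hyS, hseg⟩ := star_segment hKconv hSK
      (by rw [hcoe]; exact hmem) (hCnint a ha)
    simp only [Finset.mem_insert, Finset.mem_singleton] at hxS hyS
    have hx' : x = u ∨ x = v ∨ x ∈ frontier K := by
      rcases hxS with h1 | h1 | h1 | h1
      · exact Or.inl h1
      · exact Or.inr (Or.inl h1)
      · exact Or.inr (Or.inr (h1 ▸ hCfront b hb))
      · exact Or.inr (Or.inr (h1 ▸ hCfront c hc))
    have hy' : y = u ∨ y = v ∨ y ∈ frontier K := by
      rcases hyS with h1 | h1 | h1 | h1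
      · exact Or.inl h1
      · exact Or.inr (Or.inl h1)
      · exact Or.inr (Or.inr (h1 ▸ hCfront b hb))
      · exact Or.inr (Or.inr (h1 ▸ hCfront c hc))
    have hnotmem : a ∉ ({u, v, b, c} : Set Pt) := by
      intro h
      rcases h with h1 | h1 | h1 | h1
      · exact hCne_u a ha h1
      · exact hCne_v a ha h1
      · exact hab h1
      · exact hac h1
    rcases seg_reduce hKcl hKconv huI hvI (hCφ a ha) (hCnint a ha) hseg hx' hy' with
      (h | h) | ⟨hxF, hyF⟩
    · apply hnotmem
      rcases hxS with h1 | h1 | h1 | h1 <;> rw [h1] at h <;> simp [h]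
    · apply hnotmem
      rcases hyS with h1 | h1 | h1 | h1 <;> rw [h1] at h <;> simp [h]
    · -- x, y ∈ {b, c}
      have hxbc : x = b ∨ x = c := by
        rcases hxS with h1 | h1 | h1 | h1
        · exfalso; rw [h1, hKcl.frontier_eq] at hxF; exact hxF.2 huI
        · exfalso; rw [h1, hKcl.frontier_eq] at hxF; exact hxF.2 hvI
        · exact Or.inl h1
        · exact Or.inr h1
      have hybc : y = b ∨ y = c := by
        rcases hyS with h1 | h1 | h1 | h1
        · exfalso; rw [h1, hKcl.frontier_eq] at hyF; exact hyF.2 huI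
        · exfalso; rw [h1, hKcl.frontier_eq] at hyF; exact hyF.2 hvI
        · exact Or.inl h1
        · exact Or.inr h1
      exact seg_triple_case hncol hab hac hxbc hybc hseg
  -- strict convexity of pentagon for any noncollinear triple from C
  have hstrict : ∀ p q r : Pt, p ∈ C → q ∈ C → r ∈ C → ¬Collinear ℝ ({p, q, r} : Set Pt) →
      StrictlyConvexPos ({u, v, p, q, r} : Set Pt) := by
    intro p q r hp hq hr hncol
    obtain ⟨hpq, hpr, hqr⟩ := noncollinear_distinct hncol
    -- u not in hull of rest
    have hfaceu : ∀ a : Pt, det2 (v - u) (a - u) = 0 →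
        a ∈ convexHull ℝ ({v, p, q, r} : Set Pt) → a = v := by
      intro a hφa hmem
      have hcoe : ((({v, p, q, r} : Finset Pt)) : Set Pt) = ({v, p, q, r} : Set Pt) := by simp
      rw [← hcoe] at hmem
      have hS0 : ∀ s ∈ ({v, p, q, r} : Finset Pt), 0 ≤ det2 (v - u) (s - u) := by
        intro s hs
        simp only [Finset.mem_insert, Finset.mem_singleton] at hs
        rcases hs with h1 | h1 | h1 | h1 <;> rw [h1]
        · exact hφv0.ge
        · exact (hCφ p hp).le
        · exact (hCφ q hq).le
        · exact (hCφ r hr).le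
      have hface := face_lemma hS0 hmem (le_of_eq hφa)
      have hsub : ((({v, p, q, r} : Finset Pt)) : Set Pt) ∩
          {x : Pt | det2 (v - u) (x - u) = 0} ⊆ ({v} : Set Pt) := by
        rintro s ⟨hs1, hs2⟩
        rw [hcoe] at hs1
        rcases hs1 with h1 | h1 | h1 | h1
        · exact h1
        · exfalso; rw [h1] at hs2; exact absurd (hCφ p hp) (by rw [hs2]; exact lt_irrefl 0)
        · exfalso; rw [h1] at hs2; exact absurd (hCφ q hq) (by rw [hs2]; exact lt_irrefl 0)
        · exfalso; rw [h1] at hs2; exact absurd (hCφ r hr) (by rw [hs2]; exact lt_irrefl 0)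
      have h2 := convexHull_mono hsub hface
      rw [convexHull_singleton] at h2
      exact h2
    have hunotin : u ∉ convexHull ℝ ({v, p, q, r} : Set Pt) := by
      intro hmem
      exact huv (hfaceu u hφu0 hmem)
    have hvnotin : v ∉ convexHull ℝ ({u, p, q, r} : Set Pt) := by
      intro hmem
      -- use face lemma with the set {u,p,q,r}
      have hcoe : ((({u, p, q, r} : Finset Pt)) : Set Pt) = ({u, p, q, r} : Set Pt) := by simp
      rw [← hcoe] at hmem
      have hS0 : ∀ s ∈ ({u, p, q, r} : Finset Pt), 0 ≤ det2 (v - u) (s - u) := by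
        intro s hs
        simp only [Finset.mem_insert, Finset.mem_singleton] at hs
        rcases hs with h1 | h1 | h1 | h1 <;> rw [h1]
        · exact hφu0.ge
        · exact (hCφ p hp).le
        · exact (hCφ q hq).le
        · exact (hCφ r hr).le
      have hface := face_lemma hS0 hmem (le_of_eq hφv0)
      have hsub : ((({u, p, q, r} : Finset Pt)) : Set Pt) ∩
          {x : Pt | det2 (v - u) (x - u) = 0} ⊆ ({u} : Set Pt) := by
        rintro s ⟨hs1, hs2⟩
        rw [hcoe] at hs1
        rcases hs1 with h1 | h1 | h1 | h1
        · exact h1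
        · exfalso; rw [h1] at hs2; exact absurd (hCφ p hp) (by rw [hs2]; exact lt_irrefl 0)
        · exfalso; rw [h1] at hs2; exact absurd (hCφ q hq) (by rw [hs2]; exact lt_irrefl 0)
        · exfalso; rw [h1] at hs2; exact absurd (hCφ r hr) (by rw [hs2]; exact lt_irrefl 0)
      have h2 := convexHull_mono hsub hface
      rw [convexHull_singleton] at h2
      exact huv h2.symm
    have hpnotin := hnotin3 p q r hp hq hr hncol
    have hqnotin : q ∉ convexHull ℝ ({u, v, p, r} : Set Pt) := by
      exact hnotin3 q p r hq hp hr (by rw [set3_perm_bac]; exact hncol)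
    have hrnotin : r ∉ convexHull ℝ ({u, v, p, q} : Set Pt) := by
      exact hnotin3 r p q hr hp hq (by rw [set3_perm_cab]; exact hncol)
    intro ξ hξ
    simp only [Set.mem_insert_iff, Set.mem_singleton_iff] at hξ
    rcases hξ with h1 | h1 | h1 | h1 | h1
    · rw [h1]
      exact extreme_insert_of_not_mem ⟨v, by simp⟩ hunotin
    · rw [h1, ins5_v u v p q r]
      exact extreme_insert_of_not_mem ⟨u, by simp⟩ hvnotin
    · rw [h1, ins5_p u v p q r]
      exact extreme_insert_of_not_mem ⟨u, by simp⟩ hpnotin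
    · rw [h1, ins5_q u v p q r]
      exact extreme_insert_of_not_mem ⟨u, by simp⟩ hqnotin
    · rw [h1, ins5_r u v p q r]
      exact extreme_insert_of_not_mem ⟨u, by simp⟩ hrnotin
  -- ncard of pentagon
  have hX5 : ∀ p q r : Pt, p ∈ C → q ∈ C → r ∈ C → ¬Collinear ℝ ({p, q, r} : Set Pt) →
      ({u, v, p, q, r} : Set Pt).ncard = 5 := by
    intro p q r hp hq hr hncol
    obtain ⟨hpq, hpr, hqr⟩ := noncollinear_distinct hncol
    have h1 : ({r} : Set Pt).ncard = 1 := Set.ncard_singleton r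
    have h2 : ({q, r} : Set Pt).ncard = 2 := by
      rw [Set.ncard_insert_of_notMem (by simpa using hqr) (Set.finite_singleton r), h1]
    have h3 : ({p, q, r} : Set Pt).ncard = 3 := by
      rw [Set.ncard_insert_of_notMem ?_ ((Set.finite_singleton r).insert q), h2]
      simp only [Set.mem_insert_iff, Set.mem_singleton_iff]
      rintro (h | h)
      exacts [hpq h, hpr h]
    have h4 : ({v, p, q, r} : Set Pt).ncard = 4 := by
      rw [Set.ncard_insert_of_notMem ?_ (((Set.finite_singleton r).insert q).insert p), h3]
      simp only [Set.mem_insert_iff, Set.mem_singleton_iff]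
      rintro (h | h | h)
      exacts [hCne_v p hp h.symm, hCne_v q hq h.symm, hCne_v r hr h.symm]
    rw [Set.ncard_insert_of_notMem ?_
      ((((Set.finite_singleton r).insert q).insert p).insert v), h4]
    simp only [Set.mem_insert_iff, Set.mem_singleton_iff]
    rintro (h | h | h | h)
    exacts [huv h, hCne_u p hp h.symm, hCne_u q hq h.symm, hCne_u r hr h.symm]
  -- minimizing triple
  obtain ⟨p₁, hp₁, q₁, hq₁, r₁, hr₁, hncol₁⟩ := exists_noncollinear_triple hnc
  set V : Set ℕ := {n | ∃ p q r : Pt, p ∈ C ∧ q ∈ C ∧ r ∈ C ∧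
      ¬Collinear ℝ ({p, q, r} : Set Pt) ∧
      n = (C ∩ convexHull ℝ ({u, v, p, q, r} : Set Pt)).ncard} with hV
  have hVne : V.Nonempty := ⟨_, p₁, q₁, r₁, hp₁, hq₁, hr₁, hncol₁, rfl⟩
  have hmin := Nat.sInf_mem hVne
  simp only [hV, Set.mem_setOf_eq] at hmin
  obtain ⟨p, q, r, hp, hq, hr, hncol, hn⟩ := hmin
  set X : Set Pt := {u, v, p, q, r} with hX
  have hmemX : ∀ w : Pt, (w = u ∨ w = v ∨ w = p ∨ w = q ∨ w = r) → w ∈ X := by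
    intro w hw
    rw [hX]
    rcases hw with h | h | h | h | h <;> rw [h] <;> simp
  have hXsub : X ⊆ P := by
    intro w hw
    rw [hX] at hw
    simp only [Set.mem_insert_iff, Set.mem_singleton_iff] at hw
    rcases hw with h | h | h | h | h <;> rw [h]
    exacts [hBP huB, hBP hvB, hCP hp, hCP hq, hCP hr]
  have hcoe : ((({u, v, p, q, r} : Finset Pt)) : Set Pt) = X := by rw [hX]; simp
  have hXK : ∀ s ∈ ({u, v, p, q, r} : Finset Pt), (s : Pt) ∈ K := by
    intro s hs
    simp only [Finset.mem_insert, Finset.mem_singleton] at hs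
    rcases hs with h | h | h | h | h <;> rw [h]
    exacts [interior_subset huI, interior_subset hvI, hCK p hp, hCK q hq, hCK r hr]
  have hempty : P ∩ convexHull ℝ X = X := by
    apply Set.Subset.antisymm
    · rintro z ⟨hzP, hzH⟩
      rcases lt_trichotomy (det2 (v - u) (z - u)) 0 with hlt | heq0 | hgt
      · exfalso
        have hge : convexHull ℝ X ⊆ {x : Pt | 0 ≤ det2 (v - u) (x - u)} := by
          apply convexHull_min ?_ (convex_det_nonneg _ _)
          intro s hs
          rw [hX] at hs
          simp only [Set.mem_insert_iff, Set.mem_singleton_iff] at hs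
          rcases hs with h | h | h | h | h <;> rw [h]
          exacts [hφu0.ge, hφv0.ge, (hCφ p hp).le, (hCφ q hq).le, (hCφ r hr).le]
        exact absurd (hge hzH) (not_le.2 hlt)
      · -- z on the line uv
        have hS0 : ∀ s ∈ ({u, v, p, q, r} : Finset Pt), 0 ≤ det2 (v - u) (s - u) := by
          intro s hs
          simp only [Finset.mem_insert, Finset.mem_singleton] at hs
          rcases hs with h | h | h | h | h <;> rw [h]
          exacts [hφu0.ge, hφv0.ge, (hCφ p hp).le, (hCφ q hq).le, (hCφ r hr).le]
        have hface := face_lemma hS0 (by rw [hcoe]; exact hzH) (le_of_eq heq0)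
        have hsub : ((({u, v, p, q, r} : Finset Pt)) : Set Pt) ∩
            {x : Pt | det2 (v - u) (x - u) = 0} ⊆ ({u, v} : Set Pt) := by
          rintro s ⟨hs1, hs2⟩
          simp only [Finset.coe_insert, Finset.coe_singleton, Set.mem_insert_iff,
            Set.mem_singleton_iff] at hs1
          rcases hs1 with h | h | h | h | h
          · rw [h]; simp
          · rw [h]; simp
          · exfalso; rw [h] at hs2; exact absurd (hCφ p hp) (by rw [hs2]; exact lt_irrefl 0)
          · exfalso; rw [h] at hs2; exact absurd (hCφ q hq) (by rw [hs2]; exact lt_irrefl 0)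
          · exfalso; rw [h] at hs2; exact absurd (hCφ r hr) (by rw [hs2]; exact lt_irrefl 0)
        have h2 := convexHull_mono hsub hface
        rw [convexHull_pair] at h2
        rcases eq_or_ne z u with hzu | hzu
        · exact hmemX z (Or.inl hzu)
        rcases eq_or_ne z v with hzv | hzv
        · exact hmemX z (Or.inr (Or.inl hzv))
        exfalso
        exact hsegline z hzP
          (mem_openSegment_of_ne_left_right (Ne.symm hzu) (Ne.symm hzv) h2)
      · -- z strictly on the positive side
        have hzC : z ∈ C := ⟨hzP, hgt⟩
        by_contra hzX
        obtain ⟨x, hxS, y, hyS, hseg⟩ := star_segment hKconv hXK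
          (by rw [hcoe]; exact hzH) (hCnint z hzC)
        simp only [Finset.mem_insert, Finset.mem_singleton] at hxS hyS
        have hx' : x = u ∨ x = v ∨ x ∈ frontier K := by
          rcases hxS with h | h | h | h | h
          · exact Or.inl h
          · exact Or.inr (Or.inl h)
          · exact Or.inr (Or.inr (h ▸ hCfront p hp))
          · exact Or.inr (Or.inr (h ▸ hCfront q hq))
          · exact Or.inr (Or.inr (h ▸ hCfront r hr))
        have hy' : y = u ∨ y = v ∨ y ∈ frontier K := by
          rcases hyS with h | h | h | h | h
          · exact Or.inl h
          · exact Or.inr (Or.inl h)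
          · exact Or.inr (Or.inr (h ▸ hCfront p hp))
          · exact Or.inr (Or.inr (h ▸ hCfront q hq))
          · exact Or.inr (Or.inr (h ▸ hCfront r hr))
        rcases seg_reduce hKcl hKconv huI hvI hgt (hCnint z hzC) hseg hx' hy' with
          (h | h) | ⟨hxF, hyF⟩
        · refine hzX (hmemX z ?_)
          rcases hxS with h1 | h1 | h1 | h1 | h1
          exacts [Or.inl (h.trans h1), Or.inr (Or.inl (h.trans h1)),
            Or.inr (Or.inr (Or.inl (h.trans h1))),
            Or.inr (Or.inr (Or.inr (Or.inl (h.trans h1)))),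
            Or.inr (Or.inr (Or.inr (Or.inr (h.trans h1))))]
        · refine hzX (hmemX z ?_)
          rcases hyS with h1 | h1 | h1 | h1 | h1
          exacts [Or.inl (h.trans h1), Or.inr (Or.inl (h.trans h1)),
            Or.inr (Or.inr (Or.inl (h.trans h1))),
            Or.inr (Or.inr (Or.inr (Or.inl (h.trans h1)))),
            Or.inr (Or.inr (Or.inr (Or.inr (h.trans h1))))]
        · have hxpqr : x = p ∨ x = q ∨ x = r := by
            rcases hxS with h1 | h1 | h1 | h1 | h1
            · exfalso; rw [h1, hKcl.frontier_eq] at hxF; exact hxF.2 huI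
            · exfalso; rw [h1, hKcl.frontier_eq] at hxF; exact hxF.2 hvI
            exacts [Or.inl h1, Or.inr (Or.inl h1), Or.inr (Or.inr h1)]
          have hypqr : y = p ∨ y = q ∨ y = r := by
            rcases hyS with h1 | h1 | h1 | h1 | h1
            · exfalso; rw [h1, hKcl.frontier_eq] at hyF; exact hyF.2 huI
            · exfalso; rw [h1, hKcl.frontier_eq] at hyF; exact hyF.2 hvI
            exacts [Or.inl h1, Or.inr (Or.inl h1), Or.inr (Or.inr h1)]
          have hxC : x ∈ C := by
            rcases hxpqr with h1 | h1 | h1 <;> rw [h1] <;> assumption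
          have hyC : y ∈ C := by
            rcases hypqr with h1 | h1 | h1 <;> rw [h1] <;> assumption
          have hxX : x ∈ X := by
            refine hmemX x ?_
            rcases hxpqr with h1 | h1 | h1
            exacts [Or.inr (Or.inr (Or.inl h1)),
              Or.inr (Or.inr (Or.inr (Or.inl h1))),
              Or.inr (Or.inr (Or.inr (Or.inr h1)))]
          have hyX : y ∈ X := by
            refine hmemX y ?_
            rcases hypqr with h1 | h1 | h1
            exacts [Or.inr (Or.inr (Or.inl h1)),
              Or.inr (Or.inr (Or.inr (Or.inl h1))),
              Or.inr (Or.inr (Or.inr (Or.inr h1)))]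
          rcases eq_or_ne x y with hxy | hxy
          · rw [hxy, segment_same] at hseg
            exact hzX (hseg ▸ hyX)
          have hzx : z ≠ x := by
            intro hzx
            exact hzX (hzx ▸ hxX)
          have hzy : z ≠ y := by
            intro hzy
            exact hzX (hzy ▸ hyX)
          have hzopen : z ∈ openSegment ℝ x y :=
            mem_openSegment_of_ne_left_right (Ne.symm hzx) (Ne.symm hzy) hseg
          have hthird : ∃ z₃ : Pt, z₃ ∈ C ∧ ({x, y, z₃} : Set Pt) = ({p, q, r} : Set Pt) := by
            rcases hxpqr with h1 | h1 | h1 <;> rcases hypqr with h2 | h2 | h2 <;>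
              rw [h1, h2]
            · exact absurd (h1.trans h2.symm) hxy
            · exact ⟨r, hr, rfl⟩
            · exact ⟨q, hq, set3_perm_acb p q r⟩
            · exact ⟨r, hr, set3_perm_bac p q r⟩
            · exact absurd (h1.trans h2.symm) hxy
            · exact ⟨p, hp, set3_perm_bca p q r⟩
            · exact ⟨q, hq, set3_perm_cab p q r⟩
            · exact ⟨p, hp, set3_perm_cba p q r⟩
            · exact absurd (h1.trans h2.symm) hxy
          obtain ⟨z₃, hz₃C, hperm⟩ := hthird
          have hz₃X : z₃ ∈ X := by
            have : z₃ ∈ ({p, q, r} : Set Pt) := by rw [← hperm]; simp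
            simp only [Set.mem_insert_iff, Set.mem_singleton_iff] at this
            refine hmemX z₃ ?_
            rcases this with h1 | h1 | h1
            exacts [Or.inr (Or.inr (Or.inl h1)),
              Or.inr (Or.inr (Or.inr (Or.inl h1))),
              Or.inr (Or.inr (Or.inr (Or.inr h1)))]
          have hncolxyz : ¬Collinear ℝ ({x, y, z₃} : Set Pt) := by
            rw [hperm]; exact hncol
          have hncol' : ¬Collinear ℝ ({z, y, z₃} : Set Pt) :=
            exchange_noncollinear hncolxyz hzopen
          obtain ⟨hxyne, hxz₃ne, hyz₃ne⟩ := noncollinear_distinct hncolxyz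
          have hXsub' : ({u, v, z, y, z₃} : Set Pt) ⊆ convexHull ℝ X := by
            intro w hw
            simp only [Set.mem_insert_iff, Set.mem_singleton_iff] at hw
            rcases hw with h1 | h1 | h1 | h1 | h1 <;> rw [h1]
            · exact subset_convexHull ℝ X (hmemX u (Or.inl rfl))
            · exact subset_convexHull ℝ X (hmemX v (Or.inr (Or.inl rfl)))
            · exact hzH
            · exact subset_convexHull ℝ X hyX
            · exact subset_convexHull ℝ X hz₃X
          have hhull' : convexHull ℝ ({u, v, z, y, z₃} : Set Pt) ⊆ convexHull ℝ X :=
            convexHull_min hXsub' (convex_convexHull ℝ X)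
          have hxnot : x ∉ convexHull ℝ ({u, v, z, y, z₃} : Set Pt) := by
            intro hmem
            have hxext : x ∈ Set.extremePoints ℝ (convexHull ℝ X) :=
              hstrict p q r hp hq hr hncol x hxX
            have h2 := extreme_of_subset hhull' hxext hmem
            have h3 := extremePoints_convexHull_subset h2
            simp only [Set.mem_insert_iff, Set.mem_singleton_iff] at h3
            rcases h3 with h1 | h1 | h1 | h1 | h1
            · exact hCne_u x hxC h1
            · exact hCne_v x hxC h1
            · exact hzx h1.symm
            · exact hxy h1
            · exact hxz₃ne h1
          have hlt : (C ∩ convexHull ℝ ({u, v, z, y, z₃} : Set Pt)).ncard <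
              (C ∩ convexHull ℝ X).ncard := by
            apply Set.ncard_lt_ncard ?_ (hCfin.subset Set.inter_subset_left)
            constructor
            · rintro w ⟨hwC, hwH⟩
              exact ⟨hwC, hhull' hwH⟩
            · intro hsup
              have hxmem : x ∈ C ∩ convexHull ℝ X := ⟨hxC, subset_convexHull ℝ X hxX⟩
              exact hxnot (hsup hxmem).2
          have hmemV : (C ∩ convexHull ℝ ({u, v, z, y, z₃} : Set Pt)).ncard ∈ V :=
            ⟨z, y, z₃, hzC, hyC, hz₃C, hncol', rfl⟩
          have hle := Nat.sInf_le hmemV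
          have hcontra : sInf V < sInf V := by
            calc sInf V ≤ _ := hle
            _ < (C ∩ convexHull ℝ X).ncard := hlt
            _ = sInf V := hn.symm
          exact lt_irrefl _ hcontra
    · intro w hw
      exact ⟨hXsub hw, subset_convexHull ℝ X hw⟩
  exact hpent ⟨X, hXsub, hX5 p q r hp hq hr hncol, hstrict p q r hp hq hr hncol, hempty⟩



/-- (Observation 2.) With `P` having no `ℓ` collinear points
and no empty pentagon, `A` a hull-minimal weakly convex `8ℓ`-gon with
`P ⊆ conv A`, and `B` the second convex layer: for every edge `b` of `B`,
the set `A ∩ b⁺` is collinear. -/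
theorem statement5 (ℓ : ℕ) (hℓ : 2 ≤ ℓ) (P : Set Pt) (hP : P.Finite)
    (hcol : ¬ HasCollinearPoints P ℓ) (hpent : ¬ HasEmptyPentagon P)
    (A : Set Pt) (hA : HullMinimalWeakGon P A (8 * ℓ)) (hPA : P ⊆ convexHull ℝ A)
    (B : Set Pt) (hB : B = cLayer P 2) (hBne : B.Nonempty)
    (u v : Pt) (he : IsEdgeOf B u v) (H : Set Pt) (hH : IsPosSide B u v H) :
    Collinear ℝ (A ∩ H) := by
  have hside : ∀ u' v' : Pt, IsEdgeOf B u' v' → sidePos u' v' ∩ B = ∅ →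
      Collinear ℝ (A ∩ sidePos u' v') := by
    intro u' v' he' hH'
    have hsub : A ∩ sidePos u' v' ⊆ P ∩ sidePos u' v' :=
      fun x hx => ⟨hA.1 hx.1, hx.2⟩
    exact Collinear.subset hsub (collinear_posSide hP hpent hB he' hH')
  obtain ⟨hor, hB'⟩ := hH
  rcases hor with h | h
  · rw [h]
    exact hside u v he (by rw [← h]; exact hB')
  · have hswap : sideNeg u v = sidePos v u := by
      ext x
      have hid : det2 (u - v) (x - v) = - det2 (v - u) (x - u) := by
        simp only [det2, Prod.fst_sub, Prod.snd_sub]; ring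
      simp only [sideNeg, sidePos, Set.mem_setOf_eq, hid]
      constructor <;> intro hx <;> linarith
    have he' : IsEdgeOf B v u := by
      obtain ⟨h1, h2, h3, h4, h5⟩ := he
      exact ⟨h2, h1, h3.symm, by rw [segment_symm]; exact h4,
        by rw [openSegment_symm]; exact h5⟩
    rw [h, hswap]
    exact hside v u he' (by rw [← hswap, ← h]; exact hB')
end

section
/- There exists a countably infinite set S of points in the plane ℝ² in general position (no 3 points of S are collinear) that contains no empty pentagon, i.e., there are no 5 points of S in strictly convex position whose convex hull contains no other point of S. -/
open Set

section Statement17Aux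

open MeasureTheory

lemma span_pair_ne_top (u v : Pt) : affineSpan ℝ ({u, v} : Set Pt) ≠ ⊤ := by
  intro h
  have hc := collinear_pair ℝ u v
  rw [collinear_iff_rank_le_one] at hc
  have h2 : vectorSpan ℝ ({u, v} : Set Pt) = ⊤ := by
    rw [← direction_affineSpan, h, AffineSubspace.direction_top]
  rw [h2] at hc
  have h1 : Module.rank ℝ (ℝ × ℝ) ≤ 1 := by rwa [rank_top] at hc
  have h3 : Module.rank ℝ (ℝ × ℝ) = 2 := by
    rw [rank_prod', Module.rank_self]; norm_num
  rw [h3] at h1; norm_num at h1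

lemma exists_good (c : Pt) (r : ℝ) (hr : 0 < r) (F : Finset Pt) :
    ∃ x, x ∈ Metric.ball c r ∧ x ∉ F ∧
      ∀ u ∈ F, ∀ v ∈ F, u ≠ v → ¬ Collinear ℝ ({u, v, x} : Set Pt) := by
  set Bad : Set Pt := ⋃ p : F × F, (affineSpan ℝ ({(p.1 : Pt), (p.2 : Pt)} : Set Pt) : Set Pt)
    with hBadDef
  have hBad : volume Bad = 0 := by
    refine measure_iUnion_null fun p => ?_
    exact Measure.addHaar_affineSubspace volume _ (span_pair_ne_top _ _)
  have hpos : 0 < volume (Metric.ball c r) := Metric.measure_ball_pos volume c hr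
  have hne : (Metric.ball c r \ Bad).Nonempty := by
    rw [Set.nonempty_iff_ne_empty]
    intro h
    have hsub : Metric.ball c r ⊆ Bad := by
      intro x hx
      by_contra hxB
      exact (Set.eq_empty_iff_forall_notMem.mp h x) ⟨hx, hxB⟩
    exact absurd (measure_mono_null hsub hBad) hpos.ne'
  obtain ⟨x, hxball, hxB⟩ := hne
  refine ⟨x, hxball, ?_, ?_⟩
  · intro hxF
    exact hxB (Set.mem_iUnion.mpr ⟨(⟨x, hxF⟩, ⟨x, hxF⟩), subset_affineSpan ℝ _ (by simp)⟩)
  · intro u hu v hv huv hcol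
    refine hxB (Set.mem_iUnion.mpr ⟨(⟨u, hu⟩, ⟨v, hv⟩), ?_⟩)
    exact hcol.mem_affineSpan_of_mem_of_ne (by simp) (by simp) (by simp) huv

lemma finrank_Pt : Module.finrank ℝ Pt = 2 := by
  rw [Module.finrank_prod, Module.finrank_self]

lemma span_top_of_not_collinear {X : Set Pt} (hne : X.Nonempty) (h : ¬ Collinear ℝ X) :
    affineSpan ℝ X = ⊤ := by
  by_contra htop
  apply h
  rw [collinear_iff_rank_le_one]
  have hsne : ((affineSpan ℝ X : AffineSubspace ℝ Pt) : Set Pt).Nonempty :=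
    hne.mono (subset_affineSpan ℝ X)
  have hd : (affineSpan ℝ X).direction ≠ ⊤ := by
    rw [Ne, AffineSubspace.direction_eq_top_iff_of_nonempty hsne]
    exact htop
  have hlt : (affineSpan ℝ X).direction < ⊤ := lt_top_iff_ne_top.mpr hd
  have hfr := Submodule.finrank_lt (K := ℝ) (V := Pt) hd
  rw [finrank_Pt] at hfr
  have h1 := Nat.lt_succ_iff.mp hfr
  rw [← direction_affineSpan, ← Module.finrank_eq_rank]
  exact_mod_cast h1

/-- Choice of the next point: inside the prescribed ball, avoiding all lines
through pairs of previously chosen points. -/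
noncomputable def nxt (n : ℕ) (F : Finset Pt) : Pt :=
  (exists_good (TopologicalSpace.denseSeq Pt n.unpair.1)
    (1 / ((n.unpair.2 : ℝ) + 1)) (by positivity) F).choose

lemma nxt_spec (n : ℕ) (F : Finset Pt) :
    nxt n F ∈ Metric.ball (TopologicalSpace.denseSeq Pt n.unpair.1)
      (1 / ((n.unpair.2 : ℝ) + 1)) ∧
    nxt n F ∉ F ∧ ∀ u ∈ F, ∀ v ∈ F, u ≠ v → ¬ Collinear ℝ ({u, v, nxt n F} : Set Pt) :=
  (exists_good (TopologicalSpace.denseSeq Pt n.unpair.1)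
    (1 / ((n.unpair.2 : ℝ) + 1)) (by positivity) F).choose_spec

/-- The increasing family of finite point sets. -/
noncomputable def Fam : ℕ → Finset Pt
  | 0 => ∅
  | n + 1 => insert (nxt n (Fam n)) (Fam n)

lemma Fam_succ (n : ℕ) : Fam (n + 1) = insert (nxt n (Fam n)) (Fam n) := rfl

lemma Fam_mono : Monotone Fam := monotone_nat_of_le_succ fun n => by
  rw [Fam_succ]; exact Finset.subset_insert _ _

lemma Fam_card (n : ℕ) : (Fam n).card = n := by
  induction n with
  | zero => rfl
  | succ n ih =>
    rw [Fam_succ, Finset.card_insert_of_notMem (nxt_spec n (Fam n)).2.1, ih]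

lemma Fam_gp (n : ℕ) : ∀ x ∈ Fam n, ∀ y ∈ Fam n, ∀ z ∈ Fam n,
    x ≠ y → y ≠ z → x ≠ z → ¬ Collinear ℝ ({x, y, z} : Set Pt) := by
  induction n with
  | zero => simp [Fam]
  | succ n ih =>
    intro x hx y hy z hz hxy hyz hxz hcol
    rw [Fam_succ, Finset.mem_insert] at hx hy hz
    have hspec := (nxt_spec n (Fam n)).2.2
    rcases hx with rfl | hx
    · rcases hy with rfl | hy
      · exact hxy rfl
      rcases hz with rfl | hz
      · exact hxz rfl
      rw [Set.insert_comm, Set.pair_comm (nxt n (Fam n)) z] at hcol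
      exact hspec y hy z hz hyz hcol
    · rcases hy with rfl | hy
      · rcases hz with rfl | hz
        · exact hyz rfl
        rw [Set.pair_comm (nxt n (Fam n)) z] at hcol
        exact hspec x hx z hz hxz hcol
      · rcases hz with rfl | hz
        · exact hspec x hx y hy hxy hcol
        · exact ih x hx y hy z hz hxy hyz hxz hcol

/-- The countable dense general-position set. -/
noncomputable def Spts : Set Pt := ⋃ n, (Fam n : Set Pt)

lemma Spts_dense : ∀ U : Set Pt, IsOpen U → U.Nonempty → (Spts ∩ U).Nonempty := by
  intro U hU hUne
  obtain ⟨x, hx⟩ := hUne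
  obtain ⟨ε, hε, hball⟩ := Metric.isOpen_iff.mp hU x hx
  obtain ⟨k, hk⟩ := exists_nat_one_div_lt (half_pos hε)
  obtain ⟨i, hi⟩ := Metric.denseRange_iff.mp (TopologicalSpace.denseRange_denseSeq Pt)
    x (ε / 2) (half_pos hε)
  set n := Nat.pair i k with hn
  have hsp := (nxt_spec n (Fam n)).1
  rw [hn, Nat.unpair_pair] at hsp
  have hmem : nxt n (Fam n) ∈ Spts := by
    refine Set.mem_iUnion.mpr ⟨n + 1, ?_⟩
    rw [Fam_succ]
    exact Finset.mem_coe.mpr (Finset.mem_insert_self _ _)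
  refine ⟨nxt n (Fam n), hmem, hball ?_⟩
  rw [Metric.mem_ball]
  have h1 : dist (nxt n (Fam n)) (TopologicalSpace.denseSeq Pt i) < 1 / ((k : ℝ) + 1) :=
    Metric.mem_ball.mp hsp
  calc dist (nxt n (Fam n)) x
      ≤ dist (nxt n (Fam n)) (TopologicalSpace.denseSeq Pt i)
        + dist (TopologicalSpace.denseSeq Pt i) x := dist_triangle _ _ _
    _ < 1 / ((k : ℝ) + 1) + ε / 2 := by
        have := dist_comm x (TopologicalSpace.denseSeq Pt i)
        exact add_lt_add h1 (by rw [dist_comm]; exact hi)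
    _ < ε / 2 + ε / 2 := by linarith
    _ = ε := by ring

lemma three_distinct {X : Set Pt} (hfin : X.Finite) (h5 : X.ncard = 5) :
    ∃ a ∈ X, ∃ b ∈ X, ∃ c ∈ X, a ≠ b ∧ a ≠ c ∧ b ≠ c := by
  obtain ⟨a, ha⟩ := Set.nonempty_of_ncard_ne_zero (s := X) (by omega)
  have h4 : (X \ {a}).ncard = 4 := by
    rw [Set.ncard_diff_singleton_of_mem ha, h5]
  obtain ⟨b, hb⟩ := Set.nonempty_of_ncard_ne_zero (s := X \ {a}) (by omega)
  have h3 : ((X \ {a}) \ {b}).ncard = 3 := by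
    rw [Set.ncard_diff_singleton_of_mem hb, h4]
  obtain ⟨c, hc⟩ := Set.nonempty_of_ncard_ne_zero (s := (X \ {a}) \ {b}) (by omega)
  refine ⟨a, ha, b, hb.1, c, hc.1.1, ?_, ?_, ?_⟩
  · exact fun h => hb.2 (by simp [← h])
  · exact fun h => hc.1.2 (by simp [← h])
  · exact fun h => hc.2 (by simp [← h])

lemma no_pentagon {S : Set Pt}
    (hdense : ∀ U : Set Pt, IsOpen U → U.Nonempty → (S ∩ U).Nonempty) :
    ¬ HasEmptyPentagon S := by
  rintro ⟨X, hXS, h5, hscp, hcap⟩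
  have hfin : X.Finite := Set.finite_of_ncard_ne_zero (by omega)
  have hmemh : ∀ x ∈ X, x ∈ convexHull ℝ X := fun x hx => subset_convexHull ℝ X hx
  have hnc : ¬ Collinear ℝ X := by
    intro hcol
    obtain ⟨a, ha, b, hb, c, hc, hab, hac, hbc⟩ := three_distinct hfin h5
    have h3 : Collinear ℝ ({a, b, c} : Set Pt) :=
      hcol.subset (by simp [Set.insert_subset_iff, ha, hb, hc])
    rcases h3.wbtw_or_wbtw_or_wbtw with h | h | h
    · obtain ⟨-, hext⟩ := mem_extremePoints.mp (hscp b hb)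
      exact hab (hext a (hmemh a ha) c (hmemh c hc)
        (mem_openSegment_of_ne_left_right hab hbc.symm h.mem_segment)).1
    · obtain ⟨-, hext⟩ := mem_extremePoints.mp (hscp c hc)
      exact hbc (hext b (hmemh b hb) a (hmemh a ha)
        (mem_openSegment_of_ne_left_right hbc hac h.mem_segment)).1
    · obtain ⟨-, hext⟩ := mem_extremePoints.mp (hscp a ha)
      exact hac.symm (hext c (hmemh c hc) b (hmemh b hb)
        (mem_openSegment_of_ne_left_right hac.symm hab.symm h.mem_segment)).1
  have hne : X.Nonempty := Set.nonempty_of_ncard_ne_zero (by omega)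
  have hspan : affineSpan ℝ X = ⊤ := span_top_of_not_collinear hne hnc
  have hint : (interior (convexHull ℝ X)).Nonempty := by
    rw [(convex_convexHull ℝ X).interior_nonempty_iff_affineSpan_eq_top, affineSpan_convexHull]
    exact hspan
  obtain ⟨s, hsS, hsint⟩ := hdense _ isOpen_interior hint
  have hsX : s ∈ X := by rw [← hcap]; exact ⟨hsS, interior_subset hsint⟩
  obtain ⟨ε, hε, hball⟩ := Metric.isOpen_iff.mp isOpen_interior s hsint
  set w : Pt := ((ε / 2 : ℝ), (0 : ℝ)) with hw
  have hwn : ‖w‖ = ε / 2 := by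
    rw [hw, Prod.norm_def]
    simp only [norm_zero, Real.norm_eq_abs, abs_of_pos (half_pos hε)]
    exact max_eq_left (le_of_lt (half_pos hε))
  have h1 : s + w ∈ interior (convexHull ℝ X) := by
    apply hball
    rw [Metric.mem_ball, dist_eq_norm]
    have : s + w - s = w := by abel
    rw [this, hwn]; linarith
  have h2 : s - w ∈ interior (convexHull ℝ X) := by
    apply hball
    rw [Metric.mem_ball, dist_eq_norm]
    have : s - w - s = -w := by abel
    rw [this, norm_neg, hwn]; linarith
  have hopen : s ∈ openSegment ℝ (s - w) (s + w) := by
    refine ⟨1/2, 1/2, by norm_num, by norm_num, by norm_num, ?_⟩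
    module
  obtain ⟨-, hext⟩ := mem_extremePoints.mp (hscp s hsX)
  have heq := (hext (s - w) (interior_subset h2) (s + w) (interior_subset h1) hopen).1
  have hw0 : w = 0 := sub_eq_self.mp heq
  rw [hw, Prod.ext_iff] at hw0
  exact (half_pos hε).ne' hw0.1

end Statement17Aux

/-- There is a countably infinite set of points in the plane
in general position (no 3 collinear) containing no empty pentagon. -/
theorem statement17 :
    ∃ S : Set Pt, S.Countable ∧ S.Infinite ∧
      (∀ x ∈ S, ∀ y ∈ S, ∀ z ∈ S, x ≠ y → y ≠ z → x ≠ z →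
        ¬ Collinear ℝ ({x, y, z} : Set Pt)) ∧
      ¬ HasEmptyPentagon S := by
  refine ⟨Spts, ?_, ?_, ?_, ?_⟩
  · exact Set.countable_iUnion fun n => (Fam n).countable_toSet
  · intro hfin
    have hsub : Fam (hfin.toFinset.card + 1) ⊆ hfin.toFinset := fun x hx =>
      hfin.mem_toFinset.mpr (Set.mem_iUnion.mpr ⟨_, Finset.mem_coe.mpr hx⟩)
    have hle := Finset.card_le_card hsub
    rw [Fam_card] at hle
    omega
  · intro x hx y hy z hz hxy hyz hxz
    obtain ⟨i, hi⟩ := Set.mem_iUnion.mp hx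
    obtain ⟨j, hj⟩ := Set.mem_iUnion.mp hy
    obtain ⟨k, hk⟩ := Set.mem_iUnion.mp hz
    exact Fam_gp (max i (max j k)) x
      (Fam_mono (le_max_left _ _) (Finset.mem_coe.mp hi)) y
      (Fam_mono (le_trans (le_max_left _ _) (le_max_right _ _)) (Finset.mem_coe.mp hj)) z
      (Fam_mono (le_trans (le_max_right _ _) (le_max_right _ _)) (Finset.mem_coe.mp hk))
      hxy hyz hxz
  · exact no_pentagon Spts_dense
end
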